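/- arXiv:2109.08810 — 13 statements merged into one kernel-verified Lean document; each statement's English description precedes it below -/
import Mathlib

section
/- There exists a unique differentiable function f : ℝ → ℝ with f(0) = 0 satisfying f'(t) = (1 + 2·f(t)²)^(-1/2) for all t ∈ ℝ; moreover this function f is odd (f(-t) = -f(t) for all t), strictly increasing on ℝ, and a bijection from ℝ onto ℝ. -/
open Real Filter intervalIntegral

noncomputable def myPhi : ℝ → ℝ := fun u => Real.sqrt (1 + 2 * u ^ 2)

lemma myPhi_cont : Continuous myPhi := by
  unfold myPhi; continuity

lemma myPhi_one_le (u : ℝ) : 1 ≤ myPhi u := by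
  unfold myPhi
  rw [Real.one_le_sqrt]
  nlinarith [sq_nonneg u]

lemma myPhi_pos (u : ℝ) : 0 < myPhi u := lt_of_lt_of_le one_pos (myPhi_one_le u)

lemma myPhi_even (u : ℝ) : myPhi (-u) = myPhi u := by unfold myPhi; ring_nf

noncomputable def myG : ℝ → ℝ := fun s => ∫ u in (0:ℝ)..s, myPhi u

lemma myG_hasDerivAt (s : ℝ) : HasDerivAt myG (myPhi s) s :=
  intervalIntegral.integral_hasDerivAt_right
    (myPhi_cont.intervalIntegrable _ _)
    (myPhi_cont.stronglyMeasurableAtFilter _ _)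
    myPhi_cont.continuousAt

lemma myG_strictMono : StrictMono myG := by
  apply strictMono_of_deriv_pos
  intro x
  rw [(myG_hasDerivAt x).deriv]
  exact myPhi_pos x

lemma myG_continuous : Continuous myG :=
  continuous_iff_continuousAt.2 fun x => (myG_hasDerivAt x).continuousAt

lemma myG_ge (s : ℝ) (hs : 0 ≤ s) : s ≤ myG s := by
  have : (∫ u in (0:ℝ)..s, (1:ℝ)) ≤ ∫ u in (0:ℝ)..s, myPhi u := by
    apply intervalIntegral.integral_mono_on hs
      (intervalIntegrable_const) (myPhi_cont.intervalIntegrable _ _)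
    intro u _; exact myPhi_one_le u
  simpa [myG] using this

lemma myG_odd (s : ℝ) : myG (-s) = -myG s := by
  unfold myG
  have h1 : (∫ u in (0:ℝ)..s, myPhi (-u)) = ∫ u in (-s)..(0:ℝ), myPhi u := by
    simp [intervalIntegral.integral_comp_neg (a := (0:ℝ)) (b := s) (f := myPhi)]
  have h2 : (∫ u in (0:ℝ)..s, myPhi (-u)) = ∫ u in (0:ℝ)..s, myPhi u := by
    congr 1; ext u; exact myPhi_even u
  have h3 : (∫ u in (0:ℝ)..(-s), myPhi u) = - ∫ u in (-s)..(0:ℝ), myPhi u :=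
    intervalIntegral.integral_symm (-s) 0
  rw [h3, ← h1, h2]

lemma myG_le (s : ℝ) (hs : s ≤ 0) : myG s ≤ s := by
  have := myG_ge (-s) (by linarith)
  rw [myG_odd] at this
  linarith

lemma myG_surj : Function.Surjective myG := by
  apply myG_continuous.surjective
  · exact tendsto_atTop_mono' _ (eventually_atTop.2 ⟨0, fun s hs => myG_ge s hs⟩) tendsto_id
  · exact tendsto_atBot_mono' _ (eventually_atBot.2 ⟨0, fun s hs => myG_le s hs⟩) tendsto_id

noncomputable def myIso : ℝ ≃o ℝ := StrictMono.orderIsoOfSurjective myG myG_strictMono myG_surj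

noncomputable def myF : ℝ → ℝ := fun t => myIso.symm t

lemma myG_myF (t : ℝ) : myG (myF t) = t := myIso.apply_symm_apply t

lemma myF_hasDerivAt (t : ℝ) :
    HasDerivAt myF (1 / Real.sqrt (1 + 2 * myF t ^ 2)) t := by
  have h := HasDerivAt.of_local_left_inverse
    (g := myF) (f := myG) (a := t)
    (myIso.symm.continuous.continuousAt)
    (myG_hasDerivAt (myF t))
    (ne_of_gt (myPhi_pos (myF t)))
    (Filter.Eventually.of_forall fun y => myG_myF y)
  simpa [myPhi, one_div] using h

lemma myF_zero : myF 0 = 0 := by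
  have : myG 0 = 0 := by simp [myG]
  have := myG_strictMono.injective (by rw [myG_myF, this] : myG (myF 0) = myG 0)
  exact this

-- Any solution equals myF.
lemma sol_eq (f : ℝ → ℝ) (h0 : f 0 = 0)
    (hf : ∀ t : ℝ, HasDerivAt f (1 / Real.sqrt (1 + 2 * f t ^ 2)) t) :
    f = myF := by
  have key : ∀ t, myG (f t) = t := by
    have hd : ∀ t, HasDerivAt (fun t => myG (f t) - t) 0 t := by
      intro t
      have h1 : HasDerivAt (fun t => myG (f t))
          (myPhi (f t) * (1 / Real.sqrt (1 + 2 * f t ^ 2))) t :=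
        (myG_hasDerivAt (f t)).comp t (hf t)
      have h2 : myPhi (f t) * (1 / Real.sqrt (1 + 2 * f t ^ 2)) = 1 := by
        rw [mul_one_div]
        exact div_self (ne_of_gt (myPhi_pos (f t)))
      rw [h2] at h1
      simpa using (show HasDerivAt (fun t => myG (f t) - t) (1 - 1) t from h1.sub (hasDerivAt_id' t))
    have hconst : ∀ t, myG (f t) - t = myG (f 0) - 0 := by
      intro t
      exact is_const_of_deriv_eq_zero (fun x => (hd x).differentiableAt)
        (fun x => (hd x).deriv) t 0
    intro t
    have := hconst t
    rw [h0] at this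
    have hz : myG 0 = 0 := by simp [myG]
    rw [hz] at this
    linarith
  funext t
  exact myG_strictMono.injective (by rw [key, myG_myF])

/-- There exists a unique differentiable function `f : ℝ → ℝ` with `f 0 = 0` satisfying
`f'(t) = (1 + 2 f(t)²)^(-1/2)` for all `t`; moreover this `f` is odd, strictly increasing,
and a bijection from `ℝ` onto `ℝ`. -/
theorem stmt_0 :
    (∃! f : ℝ → ℝ, f 0 = 0 ∧
      ∀ t : ℝ, HasDerivAt f (1 / Real.sqrt (1 + 2 * f t ^ 2)) t) ∧
    (∀ f : ℝ → ℝ, f 0 = 0 →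
      (∀ t : ℝ, HasDerivAt f (1 / Real.sqrt (1 + 2 * f t ^ 2)) t) →
      (∀ t : ℝ, f (-t) = -f t) ∧ StrictMono f ∧ Function.Bijective f) := by
  constructor
  · refine ⟨myF, ⟨myF_zero, myF_hasDerivAt⟩, ?_⟩
    intro f ⟨h0, hf⟩
    exact sol_eq f h0 hf
  · intro f h0 hf
    have hEq : f = myF := sol_eq f h0 hf
    subst hEq
    refine ⟨?_, myIso.symm.strictMono, myIso.symm.bijective⟩
    intro t
    apply myG_strictMono.injective
    rw [myG_myF, myG_odd, myG_myF]
end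

section
/- For all t ∈ ℝ, one has |f(t)| ≤ |t|, and also |f(t)| ≤ 2^(1/4)·|t|^(1/2). -/
/-- For all `t`, `|f t| ≤ |t|` and `|f t| ≤ 2^(1/4) |t|^(1/2)`. -/
theorem stmt_2 (f : ℝ → ℝ) (hf0 : f 0 = 0)
    (hfodd : ∀ t : ℝ, f (-t) = -f t)
    (hf' : ∀ t : ℝ, HasDerivAt f (1 / Real.sqrt (1 + 2 * f t ^ 2)) t) :
    ∀ t : ℝ, |f t| ≤ |t| ∧ |f t| ≤ (2 : ℝ) ^ ((1 : ℝ) / 4) * |t| ^ ((1 : ℝ) / 2) := by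
  intro t
  have hpos : ∀ x : ℝ, (1 : ℝ) ≤ Real.sqrt (1 + 2 * f x ^ 2) := by
    intro x
    nlinarith [Real.sq_sqrt (show (0:ℝ) ≤ 1 + 2 * f x ^ 2 by positivity),
      Real.sqrt_nonneg (1 + 2 * f x ^ 2), sq_nonneg (f x)]
  -- first bound: f is 1-Lipschitz
  have h1 : |f t| ≤ |t| := by
    have := Convex.norm_image_sub_le_of_norm_hasDerivWithin_le
      (f := f) (f' := fun x => 1 / Real.sqrt (1 + 2 * f x ^ 2)) (C := 1)
      (fun x _ => (hf' x).hasDerivWithinAt)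
      (fun x _ => by
        rw [Real.norm_eq_abs, abs_of_nonneg (by positivity)]
        rw [div_le_one (lt_of_lt_of_le one_pos (hpos x))]
        exact hpos x)
      convex_univ (Set.mem_univ 0) (Set.mem_univ t)
    simpa [hf0, Real.norm_eq_abs] using this
  refine ⟨h1, ?_⟩
  -- second bound: f^2 is √2-Lipschitz
  have hsq : f t ^ 2 ≤ Real.sqrt 2 * |t| := by
    have hd : ∀ x : ℝ, HasDerivAt (fun y => f y ^ 2)
        (2 * f x * (1 / Real.sqrt (1 + 2 * f x ^ 2))) x := by
      intro x
      have := (hf' x).fun_pow 2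
      simpa [mul_comm, mul_assoc, mul_left_comm] using this
    have := Convex.norm_image_sub_le_of_norm_hasDerivWithin_le
      (f := fun y => f y ^ 2)
      (f' := fun x => 2 * f x * (1 / Real.sqrt (1 + 2 * f x ^ 2))) (C := Real.sqrt 2)
      (fun x _ => (hd x).hasDerivWithinAt)
      (fun x _ => by
        have hxpos : (0:ℝ) < Real.sqrt (1 + 2 * f x ^ 2) :=
          lt_of_lt_of_le one_pos (hpos x)
        show ‖2 * f x * (1 / Real.sqrt (1 + 2 * f x ^ 2))‖ ≤ Real.sqrt 2
        rw [Real.norm_eq_abs, abs_mul, abs_mul, abs_two,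
          abs_of_nonneg (by positivity : (0:ℝ) ≤ 1 / Real.sqrt (1 + 2 * f x ^ 2)),
          mul_one_div, div_le_iff₀ hxpos,
          show Real.sqrt 2 * Real.sqrt (1 + 2 * f x ^ 2)
              = Real.sqrt (2 * (1 + 2 * f x ^ 2)) from
            (Real.sqrt_mul (by norm_num) _).symm,
          show 2 * |f x| = Real.sqrt ((2 * f x) ^ 2) by
            rw [Real.sqrt_sq_eq_abs, abs_mul, abs_two]]
        exact Real.sqrt_le_sqrt (by nlinarith [sq_nonneg (f x)]))
      convex_univ (Set.mem_univ 0) (Set.mem_univ t)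
    simpa [hf0, Real.norm_eq_abs, abs_of_nonneg (sq_nonneg (f t))] using this
  have habs : |f t| = Real.sqrt (f t ^ 2) := (Real.sqrt_sq_eq_abs _).symm
  rw [habs]
  calc Real.sqrt (f t ^ 2) ≤ Real.sqrt (Real.sqrt 2 * |t|) := Real.sqrt_le_sqrt hsq
    _ = Real.sqrt (Real.sqrt 2) * Real.sqrt |t| := Real.sqrt_mul (Real.sqrt_nonneg 2) _
    _ = (2 : ℝ) ^ ((1 : ℝ) / 4) * |t| ^ ((1 : ℝ) / 2) := by
        rw [Real.sqrt_eq_rpow, Real.sqrt_eq_rpow, Real.sqrt_eq_rpow,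
          ← Real.rpow_mul (by norm_num : (0:ℝ) ≤ 2)]
        norm_num
end

section
/- The limit of |f(t)| / |t|^(1/2) as |t| → +∞ equals 2^(1/4); that is, for every ε > 0 there exists M > 0 such that for all t with |t| ≥ M one has | |f(t)|/|t|^(1/2) − 2^(1/4) | < ε. -/
set_option maxHeartbeats 1000000

open Real

noncomputable def gAux (y : ℝ) : ℝ :=
  y * Real.sqrt (1 + 2 * y ^ 2) / 2 + Real.arsinh (Real.sqrt 2 * y) / (2 * Real.sqrt 2)

lemma sqrt_pos_aux (y : ℝ) : 0 < Real.sqrt (1 + 2 * y ^ 2) :=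
  Real.sqrt_pos.mpr (by positivity)

lemma gAux_deriv (y : ℝ) : HasDerivAt gAux (Real.sqrt (1 + 2 * y ^ 2)) y := by
  have hpos : (0:ℝ) < 1 + 2 * y ^ 2 := by positivity
  have hS := sqrt_pos_aux y
  have h1 : HasDerivAt (fun y : ℝ => 1 + 2 * y ^ 2) (4 * y) y := by
    have := ((hasDerivAt_pow 2 y).const_mul (2:ℝ)).const_add (1:ℝ)
    refine this.congr_deriv ?_
    push_cast; ring
  have h2 : HasDerivAt (fun y : ℝ => Real.sqrt (1 + 2 * y ^ 2))
      (4 * y / (2 * Real.sqrt (1 + 2 * y ^ 2))) y := h1.sqrt (ne_of_gt hpos)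
  have h3 : HasDerivAt (fun y : ℝ => y * Real.sqrt (1 + 2 * y ^ 2) / 2)
      ((1 * Real.sqrt (1 + 2 * y ^ 2) + y * (4 * y / (2 * Real.sqrt (1 + 2 * y ^ 2)))) / 2) y :=
    ((hasDerivAt_id y).mul h2).div_const 2
  have h4 : HasDerivAt (fun y : ℝ => Real.arsinh (Real.sqrt 2 * y) / (2 * Real.sqrt 2))
      ((Real.sqrt (1 + (Real.sqrt 2 * y) ^ 2))⁻¹ * (Real.sqrt 2 * 1) / (2 * Real.sqrt 2)) y :=
    ((Real.hasDerivAt_arsinh _).comp y ((hasDerivAt_id y).const_mul (Real.sqrt 2))).div_const _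
  have hsq : (Real.sqrt 2 * y) ^ 2 = 2 * y ^ 2 := by
    rw [mul_pow, Real.sq_sqrt (by norm_num : (0:ℝ) ≤ 2)]
  unfold gAux
  refine (h3.add h4).congr_deriv ?_
  symm
  rw [hsq]
  have hS2 : Real.sqrt (1 + 2 * y ^ 2) ^ 2 = 1 + 2 * y ^ 2 := Real.sq_sqrt hpos.le
  have h2pos : (0:ℝ) < Real.sqrt 2 := Real.sqrt_pos.mpr (by norm_num)
  field_simp
  linear_combination 2 * hS2

lemma gAux_zero : gAux 0 = 0 := by simp [gAux]

lemma gAux_lower {y : ℝ} (hy : 0 < y) : Real.sqrt 2 * y ^ 2 / 2 ≤ gAux y := by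
  have h1 : Real.sqrt 2 * y ≤ Real.sqrt (1 + 2 * y ^ 2) := by
    have : Real.sqrt (2 * y ^ 2) ≤ Real.sqrt (1 + 2 * y ^ 2) :=
      Real.sqrt_le_sqrt (by nlinarith)
    rwa [Real.sqrt_mul (by norm_num) (y ^ 2), Real.sqrt_sq hy.le] at this
  have h2 : 0 ≤ Real.arsinh (Real.sqrt 2 * y) / (2 * Real.sqrt 2) := by
    have hs2 : (0:ℝ) < Real.sqrt 2 := Real.sqrt_pos.mpr (by norm_num)
    have : 0 ≤ Real.arsinh (Real.sqrt 2 * y) := Real.arsinh_nonneg_iff.mpr (by positivity)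
    positivity
  have : Real.sqrt 2 * y * y / 2 ≤ y * Real.sqrt (1 + 2 * y ^ 2) / 2 := by nlinarith
  unfold gAux; nlinarith

lemma gAux_upper {y : ℝ} (hy : 0 < y) : gAux y ≤ y + Real.sqrt 2 * y ^ 2 / 2 := by
  have hs2 : (0:ℝ) < Real.sqrt 2 := Real.sqrt_pos.mpr (by norm_num)
  have hs2sq : Real.sqrt 2 ^ 2 = 2 := Real.sq_sqrt (by norm_num)
  have h1 : Real.sqrt (1 + 2 * y ^ 2) ≤ 1 + Real.sqrt 2 * y := by
    have h := Real.sqrt_le_sqrt (show 1 + 2 * y ^ 2 ≤ (1 + Real.sqrt 2 * y) ^ 2 by nlinarith)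
    rwa [Real.sqrt_sq (by positivity)] at h
  have h2 : Real.arsinh (Real.sqrt 2 * y) ≤ Real.sqrt 2 * y := by
    rw [← Real.sinh_le_sinh, Real.sinh_arsinh]
    exact (Real.self_le_sinh_iff).mpr (by positivity)
  have h3 : y * Real.sqrt (1 + 2 * y ^ 2) / 2 ≤ y * (1 + Real.sqrt 2 * y) / 2 := by nlinarith
  have h4 : Real.arsinh (Real.sqrt 2 * y) / (2 * Real.sqrt 2) ≤ (Real.sqrt 2 * y) / (2 * Real.sqrt 2) := by
    exact div_le_div_of_nonneg_right h2 (by positivity)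
  have h5 : (Real.sqrt 2 * y) / (2 * Real.sqrt 2) = y / 2 := by
    field_simp
  unfold gAux
  nlinarith [h3, h4, h5]

/-- `|f t| / |t|^(1/2) → 2^(1/4)` as `|t| → +∞`. -/
theorem stmt_4 (f : ℝ → ℝ) (hf0 : f 0 = 0)
    (hfodd : ∀ t : ℝ, f (-t) = -f t)
    (hf' : ∀ t : ℝ, HasDerivAt f (1 / Real.sqrt (1 + 2 * f t ^ 2)) t) :
    ∀ ε : ℝ, 0 < ε → ∃ M : ℝ, 0 < M ∧ ∀ t : ℝ, M ≤ |t| →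
      |(|f t| / |t| ^ ((1 : ℝ) / 2)) - (2 : ℝ) ^ ((1 : ℝ) / 4)| < ε := by
  intro ε hε
  -- key : gAux (f t) = t
  have hkey : ∀ t : ℝ, gAux (f t) = t := by
    have hdiff : Differentiable ℝ (fun t => gAux (f t) - t) := fun t =>
      (((gAux_deriv (f t)).comp t (hf' t)).sub (hasDerivAt_id t)).differentiableAt
    have hderiv : ∀ t, deriv (fun t => gAux (f t) - t) t = 0 := by
      intro t
      have h := ((gAux_deriv (f t)).comp t (hf' t)).sub (hasDerivAt_id t)
      have he : Real.sqrt (1 + 2 * f t ^ 2) * (1 / Real.sqrt (1 + 2 * f t ^ 2)) - 1 = 0 := by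
        have := sqrt_pos_aux (f t)
        field_simp
        norm_num
      rw [he] at h
      exact h.deriv
    intro t
    have h := is_const_of_deriv_eq_zero hdiff hderiv t 0
    simp only [hf0, gAux_zero, sub_zero] at h
    linarith [h]
  have hmono : StrictMono f := strictMono_of_deriv_pos (fun t => by
    rw [(hf' t).deriv]
    have := sqrt_pos_aux (f t)
    positivity)
  set A : ℝ := (2:ℝ) ^ ((1:ℝ)/4) with hA
  have hApos : 0 < A := Real.rpow_pos_of_pos (by norm_num) _
  have hs2 : (0:ℝ) < Real.sqrt 2 := Real.sqrt_pos.mpr (by norm_num)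
  have hs2sq : Real.sqrt 2 ^ 2 = 2 := Real.sq_sqrt (by norm_num)
  have hA2 : A ^ 2 = Real.sqrt 2 := by
    rw [Real.sqrt_eq_rpow, hA, ← Real.rpow_natCast ((2:ℝ) ^ ((1:ℝ)/4)) 2,
      ← Real.rpow_mul (by norm_num : (0:ℝ) ≤ 2)]
    norm_num
  refine ⟨2 / ε ^ 2 + 1, by positivity, ?_⟩
  intro t ht
  have hMpos : (0:ℝ) < 2 / ε ^ 2 + 1 := by positivity
  have hspos : 0 < |t| := lt_of_lt_of_le hMpos ht
  set s := |t| with hs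
  -- reduce |f t| to f s
  have hfs : |f t| = f s := by
    rcases abs_cases t with ⟨h1, h2⟩ | ⟨h1, h2⟩
    · rw [hs, h1]
      exact abs_of_nonneg (by rw [← hf0]; exact (hmono.le_iff_le.mpr h2))
    · have : f t < 0 := by rw [← hf0]; exact hmono (by linarith)
      rw [hs, h1, abs_of_neg this, ← hfodd]
  have hy : 0 < f s := by rw [← hf0]; exact hmono hspos
  set y := f s with hyd
  have hgy : gAux y = s := hkey s
  have hlow : Real.sqrt 2 * y ^ 2 / 2 ≤ s := hgy ▸ gAux_lower hy
  have hup : s ≤ y + Real.sqrt 2 * y ^ 2 / 2 := hgy ▸ gAux_upper hy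
  -- r = sqrt s
  set r := Real.sqrt s with hr
  have hrpos : 0 < r := Real.sqrt_pos.mpr hspos
  have hrsq : r ^ 2 = s := Real.sq_sqrt hspos.le
  have hrpow : s ^ ((1:ℝ)/2) = r := (Real.sqrt_eq_rpow s).symm
  -- y ≤ A * r
  have hyAr : y ≤ A * r := by
    have h1 : y ^ 2 ≤ (A * r) ^ 2 := by
      rw [mul_pow, hA2, hrsq]; nlinarith
    nlinarith [mul_pos hApos hrpos]
  -- A * r - y ≤ sqrt 2
  have hgap : A * r - y ≤ Real.sqrt 2 := by
    have h1 : (A * r) ^ 2 - y ^ 2 ≤ Real.sqrt 2 * y := by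
      rw [mul_pow, hA2, hrsq]; nlinarith
    nlinarith [mul_pos hApos hrpos, mul_pos hs2 hy]
  -- conclude
  rw [hfs, hrpow]
  have hyr : y / r ≤ A := (div_le_iff₀ hrpos).mpr (by linarith [hyAr])
  have habs : |y / r - A| = A - y / r := by
    rw [abs_of_nonpos (by linarith)]; ring
  rw [habs]
  have hrb : Real.sqrt 2 < ε * r := by
    have h1 : 2 / ε ^ 2 < r ^ 2 := by rw [hrsq]; linarith
    rw [div_lt_iff₀ (pow_pos hε 2)] at h1
    have h2 : Real.sqrt 2 ^ 2 < (ε * r) ^ 2 := by rw [hs2sq]; nlinarith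
    exact lt_of_pow_lt_pow_left₀ 2 (le_of_lt (mul_pos hε hrpos)) h2
  have : A - y / r ≤ Real.sqrt 2 / r := by
    rw [le_div_iff₀ hrpos]
    have heq : (A - y / r) * r = A * r - y := by field_simp
    rw [heq]; exact hgap
  calc A - y / r ≤ Real.sqrt 2 / r := this
    _ < ε := by rw [div_lt_iff₀ hrpos]; linarith
end

section
/- For all t ∈ ℝ, one has f(t)²/2 ≤ t·f'(t)·f(t) ≤ f(t)². Consequently, for every t ≠ 0, 0 ≤ f(t)·f'(t)/t ≤ 1. -/
private lemma mono_of_hasDeriv {g g' : ℝ → ℝ} (h : ∀ t, HasDerivAt g (g' t) t)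
    (h0 : ∀ t, 0 ≤ g' t) : Monotone g :=
  monotone_of_deriv_nonneg (fun t => (h t).differentiableAt)
    (fun t => by rw [(h t).deriv]; exact h0 t)

/-- `f(t)²/2 ≤ t f'(t) f(t) ≤ f(t)²` for all `t`; consequently `0 ≤ f(t) f'(t) / t ≤ 1`
for all `t ≠ 0`. -/
theorem stmt_5 (f : ℝ → ℝ) (hf0 : f 0 = 0)
    (hfodd : ∀ t : ℝ, f (-t) = -f t)
    (hf' : ∀ t : ℝ, HasDerivAt f (1 / Real.sqrt (1 + 2 * f t ^ 2)) t) :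
    (∀ t : ℝ, f t ^ 2 / 2 ≤ t * deriv f t * f t ∧ t * deriv f t * f t ≤ f t ^ 2) ∧
    (∀ t : ℝ, t ≠ 0 → 0 ≤ f t * deriv f t / t ∧ f t * deriv f t / t ≤ 1) := by
  have hpos : ∀ t : ℝ, (0:ℝ) < 1 + 2 * f t ^ 2 := fun t => by positivity
  set s : ℝ → ℝ := fun t => Real.sqrt (1 + 2 * f t ^ 2) with hs_def
  have hspos : ∀ t, 0 < s t := fun t => Real.sqrt_pos.mpr (hpos t)
  have hssq : ∀ t, s t ^ 2 = 1 + 2 * f t ^ 2 := fun t => Real.sq_sqrt (hpos t).le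
  have hs1 : ∀ t, 1 ≤ s t := fun t => by
    nlinarith [hssq t, hspos t, sq_nonneg (f t), sq_nonneg (s t - 1)]
  set φ : ℝ → ℝ := fun t => f t * s t with hφ_def
  have hφ' : ∀ t, HasDerivAt φ ((1 + 4 * f t ^ 2) / (1 + 2 * f t ^ 2)) t := by
    intro t
    have h1 : HasDerivAt (fun u => 1 + 2 * f u ^ 2)
        (2 * (2 * f t ^ 1 * (1 / s t))) t := (((hf' t).pow 2).const_mul 2).const_add 1
    have h2 := (Real.hasDerivAt_sqrt (ne_of_gt (hpos t))).comp t h1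
    have h3 := (hf' t).mul h2
    refine h3.congr_deriv ?_
    have h4 : s t ≠ 0 := (hspos t).ne'
    have h5 : s t ^ 2 = 1 + 2 * f t ^ 2 := hssq t
    change 1 / s t * s t + f t * (1 / (2 * s t) * (2 * (2 * f t ^ 1 * (1 / s t)))) = _
    field_simp
    nlinarith [hssq t, sq_nonneg (f t)]
  -- monotone auxiliary functions
  have hmonoA : Monotone (fun t => 2 * t - φ t) := by
    apply mono_of_hasDeriv (g' := fun t => 2 - (1 + 4 * f t ^ 2) / (1 + 2 * f t ^ 2))
    · intro t
      have := ((hasDerivAt_id t).const_mul 2).sub (hφ' t)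
      exact this.congr_deriv (by ring)
    · intro t
      have h := hpos t
      rw [sub_nonneg, div_le_iff₀ h]
      nlinarith [sq_nonneg (f t)]
  have hmonoB : Monotone (fun t => φ t - t) := by
    apply mono_of_hasDeriv (g' := fun t => (1 + 4 * f t ^ 2) / (1 + 2 * f t ^ 2) - 1)
    · intro t; exact (hφ' t).sub (hasDerivAt_id t)
    · intro t
      have h := hpos t
      rw [sub_nonneg, le_div_iff₀ h]
      nlinarith [sq_nonneg (f t)]
  have hmonoC : Monotone (fun t => t - f t) := by
    apply mono_of_hasDeriv (g' := fun t => 1 - 1 / s t)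
    · intro t; exact (hasDerivAt_id t).sub (hf' t)
    · intro t
      have h := hspos t
      rw [sub_nonneg, div_le_one h]; exact hs1 t
  have hmonoD : Monotone (fun t => t + f t) := by
    apply mono_of_hasDeriv (g' := fun t => 1 + 1 / s t)
    · intro t; exact (hasDerivAt_id t).add (hf' t)
    · intro t; positivity
  have hmonof : Monotone f := by
    apply mono_of_hasDeriv (g' := fun t => 1 / s t) hf'
    intro t; positivity
  have hφ0 : φ 0 = 0 := by simp [hφ_def, hf0]
  -- bounds on φ and f by sign of t
  have hkey : ∀ t : ℝ, f t * t ≤ f t * φ t ∧ f t * φ t ≤ 2 * (f t * t) ∧ f t ^ 2 ≤ t ^ 2 := by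
    intro t
    rcases le_total 0 t with ht | ht
    · have hf_nn : 0 ≤ f t := hf0 ▸ hmonof ht
      have hA : φ t ≤ 2 * t := by have := hmonoA ht; simp at this; linarith [hφ0 ▸ this]
      have hB : t ≤ φ t := by have := hmonoB ht; simp [hφ0] at this; linarith
      have hC : f t ≤ t := by have := hmonoC ht; simp [hf0] at this; linarith
      have hD : -t ≤ f t := by have := hmonoD ht; simp [hf0] at this; linarith
      refine ⟨?_, ?_, ?_⟩
      · exact mul_le_mul_of_nonneg_left hB hf_nn
      · calc f t * φ t ≤ f t * (2 * t) := mul_le_mul_of_nonneg_left hA hf_nn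
          _ = 2 * (f t * t) := by ring
      · nlinarith
    · have hf_np : f t ≤ 0 := hf0 ▸ hmonof ht
      have hA : 2 * t ≤ φ t := by have := hmonoA ht; simp [hφ0] at this; linarith
      have hB : φ t ≤ t := by have := hmonoB ht; simp [hφ0] at this; linarith
      have hC : t ≤ f t := by have := hmonoC ht; simp [hf0] at this; linarith
      have hD : f t ≤ -t := by have := hmonoD ht; simp [hf0] at this; linarith
      refine ⟨?_, ?_, ?_⟩
      · nlinarith
      · nlinarith
      · nlinarith
  have hd : ∀ t, deriv f t = 1 / s t := fun t => (hf' t).deriv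
  have main1 : ∀ t : ℝ, f t ^ 2 / 2 ≤ t * deriv f t * f t ∧ t * deriv f t * f t ≤ f t ^ 2 := by
    intro t
    obtain ⟨h1, h2, _⟩ := hkey t
    have hsp := hspos t
    have heq : f t ^ 2 * s t = f t * φ t := by rw [hφ_def]; ring
    rw [hd t]
    have e1 : t * (1 / s t) * f t = (t * f t) / s t := by ring
    rw [e1]
    constructor
    · rw [le_div_iff₀ hsp]; nlinarith
    · rw [div_le_iff₀ hsp]; nlinarith
  refine ⟨main1, ?_⟩
  intro t ht
  obtain ⟨h1, h2⟩ := main1 t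
  obtain ⟨_, _, h3⟩ := hkey t
  have ht2 : (0:ℝ) < t ^ 2 := by positivity
  have e2 : f t * deriv f t / t = (t * deriv f t * f t) / t ^ 2 := by
    field_simp
  rw [e2]
  constructor
  · apply div_nonneg _ ht2.le; nlinarith [sq_nonneg (f t)]
  · rw [div_le_one ht2]; linarith
end

section
/- There exists a constant C > 0 such that |f(t)| ≥ C·|t| whenever |t| ≤ 1, and |f(t)| ≥ C·|t|^(1/2) whenever |t| ≥ 1. -/
/-- There is `C > 0` with `|f t| ≥ C |t|` for `|t| ≤ 1` and `|f t| ≥ C |t|^(1/2)` for `|t| ≥ 1`. -/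
theorem stmt_6 (f : ℝ → ℝ) (hf0 : f 0 = 0)
    (hfodd : ∀ t : ℝ, f (-t) = -f t)
    (hf' : ∀ t : ℝ, HasDerivAt f (1 / Real.sqrt (1 + 2 * f t ^ 2)) t) :
    ∃ C : ℝ, 0 < C ∧
      (∀ t : ℝ, |t| ≤ 1 → C * |t| ≤ |f t|) ∧
      (∀ t : ℝ, 1 ≤ |t| → C * |t| ^ ((1 : ℝ) / 2) ≤ |f t|) := by
  have hs3 : (0:ℝ) < Real.sqrt 3 := Real.sqrt_pos.mpr (by norm_num)
  set g : ℝ → ℝ := fun t => 1 / Real.sqrt (1 + 2 * f t ^ 2) with hg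
  have hpos : ∀ t, 0 < Real.sqrt (1 + 2 * f t ^ 2) := fun t =>
    Real.sqrt_pos.mpr (by positivity)
  have hdiff : Differentiable ℝ f := fun t => (hf' t).differentiableAt
  have hgpos : ∀ t, 0 < g t := fun t => one_div_pos.mpr (hpos t)
  have hgle1 : ∀ t, g t ≤ 1 := by
    intro t
    have h1 : (1:ℝ) ≤ Real.sqrt (1 + 2 * f t ^ 2) := by
      have h := Real.sqrt_le_sqrt (show (1:ℝ) ≤ 1 + 2 * f t ^ 2 by nlinarith [sq_nonneg (f t)])
      rwa [Real.sqrt_one] at h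
    calc g t = 1 / Real.sqrt (1 + 2 * f t ^ 2) := rfl
      _ ≤ 1 / 1 := one_div_le_one_div_of_le one_pos h1
      _ = 1 := by norm_num
  have hmono : StrictMono f := by
    apply strictMono_of_deriv_pos
    intro t
    rw [(hf' t).deriv]
    exact hgpos t
  have hf_nonneg : ∀ t, 0 ≤ t → 0 ≤ f t := by
    intro t ht
    have := hmono.monotone ht
    rwa [hf0] at this
  have hfle : ∀ t, 0 ≤ t → f t ≤ t := by
    intro t ht
    have hm : Monotone (fun t => t - f t) := by
      apply monotone_of_deriv_nonneg (differentiable_id.sub hdiff)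
      intro x
      rw [((hasDerivAt_id x).sub (hf' x)).deriv]
      have := hgle1 x
      linarith
    have := hm ht
    simp only [hf0, sub_zero] at this
    linarith
  -- lower bound on [0,1]
  have key1 : ∀ t ∈ Set.Icc (0:ℝ) 1, t / Real.sqrt 3 ≤ f t := by
    have hm : MonotoneOn (fun t => f t - t / Real.sqrt 3) (Set.Icc 0 1) := by
      apply monotoneOn_of_deriv_nonneg (convex_Icc 0 1)
      · exact ((hdiff.sub (differentiable_id.div_const _)).continuous).continuousOn
      · intro x _
        exact ((hdiff.sub (differentiable_id.div_const _)) x).differentiableWithinAt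
      · intro x hx
        rw [interior_Icc] at hx
        have hid : HasDerivAt (fun t : ℝ => t / Real.sqrt 3) (1 / Real.sqrt 3) x :=
          (hasDerivAt_id x).div_const _
        rw [show deriv (fun t => f t - t / Real.sqrt 3) x = _ from ((hf' x).sub hid).deriv]
        have hfx1 : f x ≤ 1 := le_trans (hfle x hx.1.le) hx.2.le
        have hfx0 : 0 ≤ f x := hf_nonneg x hx.1.le
        have h3 : Real.sqrt (1 + 2 * f x ^ 2) ≤ Real.sqrt 3 := by
          apply Real.sqrt_le_sqrt; nlinarith
        have hgl : 1 / Real.sqrt 3 ≤ g x := one_div_le_one_div_of_le (hpos x) h3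
        linarith
    intro t ht
    have h := hm (Set.left_mem_Icc.mpr one_pos.le) ht ht.1
    simp only [hf0, zero_sub, zero_div, neg_zero] at h
    linarith
  have hf1 : 1 / Real.sqrt 3 ≤ f 1 := by
    have := key1 1 (Set.right_mem_Icc.mpr one_pos.le)
    simpa [one_div] using this
  have hf1sq : (1:ℝ)/3 ≤ f 1 ^ 2 := by
    have h13 : (1 / Real.sqrt 3) ^ 2 = 1 / 3 := by
      rw [div_pow, one_pow, Real.sq_sqrt (by norm_num : (0:ℝ) ≤ 3)]
    have ha : (0:ℝ) ≤ 1 / Real.sqrt 3 := by positivity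
    have hmm := mul_le_mul hf1 hf1 ha (hf_nonneg 1 one_pos.le)
    nlinarith [hmm]
  -- lower bound on [1,∞)
  have key2 : ∀ t, 1 ≤ t → t / 3 ≤ f t ^ 2 := by
    have hm : MonotoneOn (fun t => f t ^ 2 - t / 3) (Set.Ici 1) := by
      apply monotoneOn_of_deriv_nonneg (convex_Ici 1)
      · exact (((hdiff.pow 2).sub (differentiable_id.div_const _)).continuous).continuousOn
      · intro x _
        exact (((hdiff.pow 2).sub (differentiable_id.div_const _)) x).differentiableWithinAt
      · intro x hx
        rw [interior_Ici] at hx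
        have hid : HasDerivAt (fun t : ℝ => t / 3) (1 / 3) x := (hasDerivAt_id x).div_const _
        have hpow : HasDerivAt (fun t => f t ^ 2)
            (2 * f x * (1 / Real.sqrt (1 + 2 * f x ^ 2))) x := by
          have h := (hf' x).pow 2
          norm_num at h
          simp only [one_div] at h ⊢
          exact h
        rw [show deriv (fun t => f t ^ 2 - t / 3) x = _ from (hpow.sub hid).deriv]
        have hfx : f 1 ≤ f x := (hmono hx).le
        have hfxsq : (1:ℝ)/3 ≤ f x ^ 2 := by nlinarith [hf_nonneg 1 one_pos.le]
        have hfx0 : 0 ≤ f x := le_trans (hf_nonneg 1 one_pos.le) hfx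
        have hsle : Real.sqrt (1 + 2 * f x ^ 2) ≤ 6 * f x := by
          rw [show 6 * f x = Real.sqrt ((6 * f x) ^ 2) by
            rw [Real.sqrt_sq (by positivity)]]
          apply Real.sqrt_le_sqrt; nlinarith
        have : 1 / 3 ≤ 2 * f x * g x := by
          rw [hg]
          rw [mul_one_div, le_div_iff₀ (hpos x)]
          nlinarith
        linarith
    intro t ht
    have h := hm (Set.self_mem_Ici) ht ht
    simp only at h
    nlinarith
  refine ⟨1 / Real.sqrt 3, by positivity, ?_, ?_⟩
  · -- |t| ≤ 1
    intro t ht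
    rcases le_or_gt 0 t with h0 | h0
    · rw [abs_of_nonneg h0] at ht ⊢
      rw [abs_of_nonneg (hf_nonneg t h0)]
      have := key1 t ⟨h0, ht⟩
      rw [div_eq_mul_one_div] at this
      linarith [this]
    · have h0' : 0 ≤ -t := by linarith
      rw [abs_of_neg h0] at ht ⊢
      have hodd : f (-t) = - f t := hfodd t
      have hnn : 0 ≤ f (-t) := hf_nonneg _ h0'
      have := key1 (-t) ⟨h0', ht⟩
      rw [abs_of_nonpos (by linarith [hodd ▸ hnn] : f t ≤ 0)]
      rw [div_eq_mul_one_div] at this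
      have : -t * (1 / Real.sqrt 3) ≤ - f t := by rw [← hodd]; exact this
      linarith [this]
  · -- |t| ≥ 1
    intro t ht
    have main : ∀ s : ℝ, 1 ≤ s → 1 / Real.sqrt 3 * s ^ ((1:ℝ)/2) ≤ f s := by
      intro s hs
      have hs0 : (0:ℝ) ≤ s := by linarith
      have h2 := key2 s hs
      have hfs : 0 ≤ f s := hf_nonneg s hs0
      have hsq : Real.sqrt (s / 3) ≤ f s := by
        calc Real.sqrt (s / 3) ≤ Real.sqrt (f s ^ 2) := Real.sqrt_le_sqrt h2
          _ = f s := Real.sqrt_sq hfs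
      have hrw : Real.sqrt (s / 3) = 1 / Real.sqrt 3 * s ^ ((1:ℝ)/2) := by
        rw [← Real.sqrt_eq_rpow, Real.sqrt_div hs0]
        ring
      linarith [hrw ▸ hsq]
    rcases le_or_gt 0 t with h0 | h0
    · rw [abs_of_nonneg h0] at ht ⊢
      rw [abs_of_nonneg (hf_nonneg t h0)]
      exact main t ht
    · rw [abs_of_neg h0] at ht ⊢
      have hodd : f (-t) = - f t := hfodd t
      have hnn : 0 ≤ f (-t) := hf_nonneg _ (by linarith)
      rw [abs_of_nonpos (by linarith [hodd ▸ hnn] : f t ≤ 0)]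
      have := main (-t) ht
      rw [hodd] at this
      linarith
end

section
/- The function h : ℝ → ℝ defined by h(t) = f(t)/f'(t) = f(t)·(1 + 2·f(t)²)^(1/2) is differentiable on ℝ with h'(t) = (1 + 4·f(t)²)/(1 + 2·f(t)²), one has 1 ≤ h'(t) ≤ 2 for all t ∈ ℝ, and consequently |f(t)/f'(t)| ≤ 2·|t| for all t ∈ ℝ. -/
/-- The function `h(t) = f(t)/f'(t) = f(t)·√(1+2f(t)²)` is differentiable with
`h'(t) = (1+4f(t)²)/(1+2f(t)²)`, one has `1 ≤ h'(t) ≤ 2`, and `|f(t)/f'(t)| ≤ 2|t|`. -/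
theorem stmt_8 (f : ℝ → ℝ) (hf0 : f 0 = 0)
    (hfodd : ∀ t : ℝ, f (-t) = -f t)
    (hf' : ∀ t : ℝ, HasDerivAt f (1 / Real.sqrt (1 + 2 * f t ^ 2)) t) :
    (∀ t : ℝ, f t / deriv f t = f t * Real.sqrt (1 + 2 * f t ^ 2)) ∧
    (∀ t : ℝ, HasDerivAt (fun s => f s * Real.sqrt (1 + 2 * f s ^ 2))
      ((1 + 4 * f t ^ 2) / (1 + 2 * f t ^ 2)) t) ∧
    (∀ t : ℝ, 1 ≤ (1 + 4 * f t ^ 2) / (1 + 2 * f t ^ 2) ∧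
      (1 + 4 * f t ^ 2) / (1 + 2 * f t ^ 2) ≤ 2) ∧
    (∀ t : ℝ, |f t / deriv f t| ≤ 2 * |t|) := by
  have hs : ∀ t : ℝ, (0:ℝ) < 1 + 2 * f t ^ 2 := fun t => by positivity
  have hsq : ∀ t : ℝ, (0:ℝ) < Real.sqrt (1 + 2 * f t ^ 2) := fun t =>
    Real.sqrt_pos.2 (hs t)
  have hderiv : ∀ t : ℝ, deriv f t = 1 / Real.sqrt (1 + 2 * f t ^ 2) := fun t =>
    (hf' t).deriv
  have h1 : ∀ t : ℝ, f t / deriv f t = f t * Real.sqrt (1 + 2 * f t ^ 2) := by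
    intro t
    rw [hderiv t, div_div_eq_mul_div, div_one]
  have h2 : ∀ t : ℝ, HasDerivAt (fun s => f s * Real.sqrt (1 + 2 * f s ^ 2))
      ((1 + 4 * f t ^ 2) / (1 + 2 * f t ^ 2)) t := by
    intro t
    have hinner : HasDerivAt (fun s => 1 + 2 * f s ^ 2)
        (2 * (2 * f t * (1 / Real.sqrt (1 + 2 * f t ^ 2)))) t := by
      have := ((hf' t).pow 2).const_mul 2
      simpa [mul_comm, mul_assoc, mul_left_comm] using this.const_add 1
    have hsqrt : HasDerivAt (fun s => Real.sqrt (1 + 2 * f s ^ 2))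
        (1 / (2 * Real.sqrt (1 + 2 * f t ^ 2)) *
          (2 * (2 * f t * (1 / Real.sqrt (1 + 2 * f t ^ 2))))) t :=
      (Real.hasDerivAt_sqrt (ne_of_gt (hs t))).comp t hinner
    have h : HasDerivAt (fun s => f s * Real.sqrt (1 + 2 * f s ^ 2))
        (1 / Real.sqrt (1 + 2 * f t ^ 2) * Real.sqrt (1 + 2 * f t ^ 2) +
          f t * (1 / (2 * Real.sqrt (1 + 2 * f t ^ 2)) *
            (2 * (2 * f t * (1 / Real.sqrt (1 + 2 * f t ^ 2)))))) t := (hf' t).mul hsqrt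
    convert h using 1
    have hne : Real.sqrt (1 + 2 * f t ^ 2) ≠ 0 := ne_of_gt (hsq t)
    have hsqs : Real.sqrt (1 + 2 * f t ^ 2) ^ 2 = 1 + 2 * f t ^ 2 :=
      Real.sq_sqrt (le_of_lt (hs t))
    field_simp
    ring_nf at hsqs ⊢
    nlinarith [hsqs]
  have h3 : ∀ t : ℝ, 1 ≤ (1 + 4 * f t ^ 2) / (1 + 2 * f t ^ 2) ∧
      (1 + 4 * f t ^ 2) / (1 + 2 * f t ^ 2) ≤ 2 := by
    intro t
    constructor
    · rw [le_div_iff₀ (hs t)]; nlinarith [sq_nonneg (f t)]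
    · rw [div_le_iff₀ (hs t)]; nlinarith [sq_nonneg (f t)]
  refine ⟨h1, h2, h3, ?_⟩
  intro t
  rw [h1 t]
  have key : ∀ x y : ℝ, ‖f y * Real.sqrt (1 + 2 * f y ^ 2) -
      f x * Real.sqrt (1 + 2 * f x ^ 2)‖ ≤ 2 * ‖y - x‖ := by
    intro x y
    apply Convex.norm_image_sub_le_of_norm_hasDerivWithin_le
      (f := fun s => f s * Real.sqrt (1 + 2 * f s ^ 2))
      (f' := fun s => (1 + 4 * f s ^ 2) / (1 + 2 * f s ^ 2))
      (fun s _ => (h2 s).hasDerivWithinAt) ?_ convex_univ (Set.mem_univ x)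
      (Set.mem_univ y)
    intro s _
    rw [Real.norm_eq_abs, abs_of_nonneg (by linarith [(h3 s).1])]
    exact (h3 s).2
  have := key 0 t
  rw [abs_mul] at *
  simpa [hf0, Real.norm_eq_abs, abs_mul] using this
end

section
/- The function F̄ : ℝ → ℝ defined by F̄(t) = f(t)² − t·f(t)·f'(t) is nonnegative on ℝ, nondecreasing on [0, +∞), and nonincreasing on (−∞, 0]; in particular, |t| ≤ |s| implies F̄(t) ≤ F̄(s). -/
/-- `F̄(t) = f(t)² − t f(t) f'(t)` is nonnegative, nondecreasing on `[0,∞)`,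
nonincreasing on `(−∞,0]`, and `|t| ≤ |s|` implies `F̄(t) ≤ F̄(s)`. -/
theorem stmt_9 (f : ℝ → ℝ) (hf0 : f 0 = 0)
    (hfodd : ∀ t : ℝ, f (-t) = -f t)
    (hf' : ∀ t : ℝ, HasDerivAt f (1 / Real.sqrt (1 + 2 * f t ^ 2)) t) :
    (∀ t : ℝ, 0 ≤ f t ^ 2 - t * f t * deriv f t) ∧
    MonotoneOn (fun t => f t ^ 2 - t * f t * deriv f t) (Set.Ici (0 : ℝ)) ∧
    AntitoneOn (fun t => f t ^ 2 - t * f t * deriv f t) (Set.Iic (0 : ℝ)) ∧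
    (∀ t s : ℝ, |t| ≤ |s| →
      f t ^ 2 - t * f t * deriv f t ≤ f s ^ 2 - s * f s * deriv f s) := by
  set φ : ℝ → ℝ := fun t => 1 / Real.sqrt (1 + 2 * f t ^ 2) with hφdef
  have hs : ∀ t, (0:ℝ) < 1 + 2 * f t ^ 2 := fun t => by positivity
  have hsq : ∀ t, 0 < Real.sqrt (1 + 2 * f t ^ 2) := fun t => Real.sqrt_pos.2 (hs t)
  have hφpos : ∀ t, 0 < φ t := fun t => by
    simp only [hφdef]; positivity
  have hsqsq : ∀ t, Real.sqrt (1 + 2 * f t ^ 2) ^ 2 = 1 + 2 * f t ^ 2 :=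
    fun t => Real.sq_sqrt (hs t).le
  have hd : deriv f = φ := funext fun t => (hf' t).deriv
  -- derivative of φ
  have hφ' : ∀ t, HasDerivAt φ (-2 * f t * φ t ^ 4) t := by
    intro t
    have h1 : HasDerivAt (fun u => 1 + 2 * f u ^ 2) (2 * (2 * f t ^ (2-1) * φ t)) t :=
      (((hf' t).pow 2).const_mul 2).const_add 1
    have h2 := (h1.sqrt (hs t).ne')
    have h3 := h2.inv (hsq t).ne'
    have h4 : HasDerivAt φ (-(2 * (2 * f t ^ (2 - 1) * φ t) / (2 * Real.sqrt (1 + 2 * f t ^ 2))) / Real.sqrt (1 + 2 * f t ^ 2) ^ 2) t := by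
      simpa only [hφdef, one_div, Pi.inv_def] using h3
    convert h4 using 1
    have e1 := hsqsq t
    simp only [hφdef]
    field_simp
    linear_combination (0:ℝ) * e1
  -- f is strictly monotone, nonneg on Ici 0
  have hmono : StrictMono f := by
    apply strictMono_of_deriv_pos
    intro x; rw [hd]; exact hφpos x
  have hfnn : ∀ t : ℝ, 0 ≤ t → 0 ≤ f t := by
    intro t ht
    calc (0:ℝ) = f 0 := hf0.symm
    _ ≤ f t := hmono.monotone ht
  -- g = f - t φ is nonneg on Ici 0
  have hg' : ∀ t, HasDerivAt (fun u => f u - u * φ u) (2 * t * f t * φ t ^ 4) t := by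
    intro t
    have h1 : HasDerivAt (fun u : ℝ => u * φ u) (1 * φ t + t * (-2 * f t * φ t ^ 4)) t :=
      (hasDerivAt_id t).mul (hφ' t)
    have h2 := (hf' t).sub h1
    refine h2.congr_deriv ?_
    simp only [hφdef]; ring
  have hgdiff : Differentiable ℝ (fun u => f u - u * φ u) := fun t => (hg' t).differentiableAt
  have hgnn : ∀ t : ℝ, 0 ≤ t → 0 ≤ f t - t * φ t := by
    intro t ht
    have hmg : MonotoneOn (fun u => f u - u * φ u) (Set.Ici (0:ℝ)) := by
      apply monotoneOn_of_deriv_nonneg (convex_Ici 0) hgdiff.continuous.continuousOn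
        (hgdiff.differentiableOn)
      intro x hx
      rw [interior_Ici] at hx
      rw [(hg' x).deriv]
      have h1 := hfnn x hx.le
      have h2 := (hφpos x).le
      have := mul_nonneg (mul_nonneg (mul_nonneg (by norm_num : (0:ℝ) ≤ 2) hx.le) h1)
        (pow_nonneg h2 4)
      linarith [this]
    have := hmg (Set.self_mem_Ici) (Set.mem_Ici.2 ht) ht
    simpa [hf0] using this
  -- F̄ and its derivative
  have hF' : ∀ t, HasDerivAt (fun u => f u ^ 2 - u * f u * φ u)
      (f t * φ t - t * φ t ^ 2 + 2 * t * f t ^ 2 * φ t ^ 4) t := by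
    intro t
    have h1 : HasDerivAt (fun u : ℝ => u * f u) (1 * f t + t * φ t) t :=
      (hasDerivAt_id t).mul (hf' t)
    have h2 : HasDerivAt (fun u : ℝ => u * f u * φ u)
        ((1 * f t + t * φ t) * φ t + t * f t * (-2 * f t * φ t ^ 4)) t :=
      h1.mul (hφ' t)
    have h3 := ((hf' t).pow 2).sub h2
    refine h3.congr_deriv ?_
    simp only [hφdef]; ring
  have hFdiff : Differentiable ℝ (fun u => f u ^ 2 - u * f u * φ u) :=
    fun t => (hF' t).differentiableAt
  have hFmono : MonotoneOn (fun u => f u ^ 2 - u * f u * φ u) (Set.Ici (0:ℝ)) := by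
    apply monotoneOn_of_deriv_nonneg (convex_Ici 0) hFdiff.continuous.continuousOn
      hFdiff.differentiableOn
    intro x hx
    rw [interior_Ici] at hx
    rw [(hF' x).deriv]
    have h1 := hgnn x hx.le
    have h2 := hφpos x
    have h3 := hfnn x hx.le
    have h4 : 0 ≤ φ x * (f x - x * φ x) := mul_nonneg h2.le h1
    nlinarith [sq_nonneg (f x), pow_pos h2 4, mul_nonneg (mul_nonneg hx.le (sq_nonneg (f x))) (pow_pos h2 4).le]
  -- evenness
  have hφeven : ∀ t, φ (-t) = φ t := by
    intro t; simp only [hφdef, hfodd]; ring_nf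
  have hFeven : ∀ t, f (-t) ^ 2 - (-t) * f (-t) * φ (-t) = f t ^ 2 - t * f t * φ t := by
    intro t; rw [hfodd, hφeven]; ring
  have hFnn : ∀ t, 0 ≤ f t ^ 2 - t * f t * φ t := by
    intro t
    rcases le_total 0 t with ht | ht
    · have := hFmono Set.self_mem_Ici (Set.mem_Ici.2 ht) ht
      simpa [hf0] using this
    · rw [← hFeven t]
      have := hFmono Set.self_mem_Ici (Set.mem_Ici.2 (neg_nonneg.2 ht)) (neg_nonneg.2 ht)
      simpa [hf0] using this
  rw [hd]
  refine ⟨hFnn, hFmono, ?_, ?_⟩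
  · intro t ht s hs' hts
    have h1 : (0:ℝ) ≤ -s := neg_nonneg.2 hs'
    have h2 : -s ≤ -t := neg_le_neg hts
    have := hFmono (Set.mem_Ici.2 h1) (Set.mem_Ici.2 (h1.trans h2)) h2
    simpa only [hFeven] using this
  · intro t s hts
    have habs : ∀ u : ℝ, f |u| ^ 2 - |u| * f |u| * φ |u| = f u ^ 2 - u * f u * φ u := by
      intro u
      rcases abs_cases u with ⟨h, _⟩ | ⟨h, _⟩
      · rw [h]
      · rw [h, hFeven]
    rw [← habs t, ← habs s]
    exact hFmono (Set.mem_Ici.2 (abs_nonneg t)) (Set.mem_Ici.2 (abs_nonneg s)) hts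
end

section
/- The function F̿ : ℝ → ℝ defined by F̿(t) = t·f(t)·f'(t) − f(t)²/2 is nonnegative on ℝ, nondecreasing on [0, +∞), and nonincreasing on (−∞, 0]; in particular, |t| ≤ |s| implies F̿(t) ≤ F̿(s). -/
/-- `F̿(t) = t f(t) f'(t) − f(t)²/2` is nonnegative, nondecreasing on `[0,∞)`,
nonincreasing on `(−∞,0]`, and `|t| ≤ |s|` implies `F̿(t) ≤ F̿(s)`. -/
theorem stmt_10 (f : ℝ → ℝ) (hf0 : f 0 = 0)
    (hfodd : ∀ t : ℝ, f (-t) = -f t)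
    (hf' : ∀ t : ℝ, HasDerivAt f (1 / Real.sqrt (1 + 2 * f t ^ 2)) t) :
    (∀ t : ℝ, 0 ≤ t * f t * deriv f t - f t ^ 2 / 2) ∧
    MonotoneOn (fun t => t * f t * deriv f t - f t ^ 2 / 2) (Set.Ici (0 : ℝ)) ∧
    AntitoneOn (fun t => t * f t * deriv f t - f t ^ 2 / 2) (Set.Iic (0 : ℝ)) ∧
    (∀ t s : ℝ, |t| ≤ |s| →
      t * f t * deriv f t - f t ^ 2 / 2 ≤ s * f s * deriv f s - f s ^ 2 / 2) := by
  set g : ℝ → ℝ := fun t => t * f t * deriv f t - f t ^ 2 / 2 with hg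
  have hu : ∀ t : ℝ, (0:ℝ) < 1 + 2 * f t ^ 2 := fun t => by positivity
  have hs : ∀ t : ℝ, (0:ℝ) < Real.sqrt (1 + 2 * f t ^ 2) :=
    fun t => Real.sqrt_pos.mpr (hu t)
  have hderiv : ∀ t, deriv f t = 1 / Real.sqrt (1 + 2 * f t ^ 2) :=
    fun t => (hf' t).deriv
  have hg0 : g 0 = 0 := by simp [hg, hf0]
  have hgd : ∀ t : ℝ, HasDerivAt g (t / (1 + 2 * f t ^ 2) ^ 2) t := by
    intro t
    have hu' : HasDerivAt (fun x => 1 + 2 * f x ^ 2)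
        (2 * (2 * f t ^ 1 * (1 / Real.sqrt (1 + 2 * f t ^ 2)))) t :=
      (((hf' t).pow 2).const_mul 2).const_add 1
    have hsq : HasDerivAt (fun x => Real.sqrt (1 + 2 * f x ^ 2))
        ((2 * (2 * f t ^ 1 * (1 / Real.sqrt (1 + 2 * f t ^ 2)))) /
          (2 * Real.sqrt (1 + 2 * f t ^ 2))) t :=
      hu'.sqrt (ne_of_gt (hu t))
    have hw := hsq.inv (ne_of_gt (hs t))
    have h1 := ((hasDerivAt_id t).mul (hf' t)).mul hw
    have h2 := ((hf' t).pow 2).div_const 2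
    have h3 := h1.sub h2
    have hfun : (id * f * (fun x => Real.sqrt (1 + 2 * f x ^ 2))⁻¹ - fun x => (f ^ 2) x / 2)
        = g := by
      funext x
      simp [hg, hderiv x]
    rw [hfun] at h3
    refine (h3.congr_deriv ?_).congr_deriv rfl
    symm
    simp only [Pi.mul_apply, Pi.inv_apply, id]
    set s := Real.sqrt (1 + 2 * f t ^ 2) with hsdef
    have hs2 : s ^ 2 = 1 + 2 * f t ^ 2 := Real.sq_sqrt (le_of_lt (hu t))
    have hsne : s ≠ 0 := ne_of_gt (hs t)
    rw [← hs2]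
    field_simp
    linear_combination (-2 * t) * hs2
  have hgdiff : Differentiable ℝ g := fun t => (hgd t).differentiableAt
  have hgderiv : ∀ t, deriv g t = t / (1 + 2 * f t ^ 2) ^ 2 := fun t => (hgd t).deriv
  have hmono : MonotoneOn g (Set.Ici (0:ℝ)) := by
    apply monotoneOn_of_deriv_nonneg (convex_Ici 0) hgdiff.continuous.continuousOn
      (fun x _ => (hgdiff x).differentiableWithinAt)
    intro x hx
    rw [interior_Ici, Set.mem_Ioi] at hx
    rw [hgderiv x]
    exact (div_pos hx (by positivity)).le
  have hanti : AntitoneOn g (Set.Iic (0:ℝ)) := by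
    apply antitoneOn_of_deriv_nonpos (convex_Iic 0) hgdiff.continuous.continuousOn
      (fun x _ => (hgdiff x).differentiableWithinAt)
    intro x hx
    rw [interior_Iic, Set.mem_Iio] at hx
    rw [hgderiv x]
    exact div_nonpos_of_nonpos_of_nonneg (le_of_lt hx) (by positivity)
  have hnonneg : ∀ t : ℝ, 0 ≤ g t := by
    intro t
    rcases le_total 0 t with h | h
    · calc (0:ℝ) = g 0 := hg0.symm
        _ ≤ g t := hmono (Set.self_mem_Ici) h h
    · calc (0:ℝ) = g 0 := hg0.symm
        _ ≤ g t := hanti h Set.self_mem_Iic h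
  have heven : ∀ t : ℝ, g (-t) = g t := by
    intro t
    have : deriv f (-t) = deriv f t := by
      rw [hderiv, hderiv, hfodd t]
      ring_nf
    simp only [hg, this, hfodd t]
    ring
  refine ⟨hnonneg, hmono, hanti, ?_⟩
  intro t s hts
  have habs : ∀ x : ℝ, g |x| = g x := by
    intro x
    rcases abs_cases x with ⟨h, _⟩ | ⟨h, _⟩
    · rw [h]
    · rw [h, heven]
  calc g t = g |t| := (habs t).symm
    _ ≤ g |s| := hmono (abs_nonneg t) (abs_nonneg s) hts
    _ = g s := habs s
end

section
/- For every t ≠ 0 one has 1/2 ≤ t·f'(t)/f(t) ≤ 1; consequently, for all t ≠ 0 and s ≠ 0, t·f'(t)/f(t) ≤ 2·s·f'(s)/f(s). -/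
/-- For every `t ≠ 0`, `1/2 ≤ t f'(t)/f(t) ≤ 1`; consequently, for all `t, s ≠ 0`,
`t f'(t)/f(t) ≤ 2 s f'(s)/f(s)`. -/
theorem stmt_11 (f : ℝ → ℝ) (hf0 : f 0 = 0)
    (hfodd : ∀ t : ℝ, f (-t) = -f t)
    (hf' : ∀ t : ℝ, HasDerivAt f (1 / Real.sqrt (1 + 2 * f t ^ 2)) t) :
    (∀ t : ℝ, t ≠ 0 → 1 / 2 ≤ t * deriv f t / f t ∧ t * deriv f t / f t ≤ 1) ∧
    (∀ t s : ℝ, t ≠ 0 → s ≠ 0 →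
      t * deriv f t / f t ≤ 2 * (s * deriv f s / f s)) := by
  have hpos : ∀ x : ℝ, (0:ℝ) < 1 + 2 * f x ^ 2 := fun x => by positivity
  have hsq : ∀ x : ℝ, 0 < Real.sqrt (1 + 2 * f x ^ 2) :=
    fun x => Real.sqrt_pos.mpr (hpos x)
  have hS : ∀ x : ℝ, Real.sqrt (1 + 2 * f x ^ 2) * Real.sqrt (1 + 2 * f x ^ 2)
      = 1 + 2 * f x ^ 2 := fun x => Real.mul_self_sqrt (hpos x).le
  -- derivative of F x = f x * sqrt (1 + 2 f x ^ 2)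
  have hF' : ∀ x : ℝ, HasDerivAt (fun y => f y * Real.sqrt (1 + 2 * f y ^ 2))
      ((1 + 4 * f x ^ 2) / (1 + 2 * f x ^ 2)) x := by
    intro x
    have h1 : HasDerivAt (fun y => 1 + 2 * f y ^ 2)
        (2 * (2 * f x ^ 1 * (1 / Real.sqrt (1 + 2 * f x ^ 2)))) x :=
      (((hf' x).pow 2).const_mul 2).const_add 1
    have h2 : HasDerivAt (fun y => f y * Real.sqrt (1 + 2 * f y ^ 2)) _ x := (hf' x).mul (h1.sqrt (ne_of_gt (hpos x)))
    convert h2 using 1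
    have s0 : Real.sqrt (1 + 2 * f x ^ 2) ≠ 0 := (hsq x).ne'
    field_simp
    nlinarith [hS x, hsq x, Real.sq_sqrt (show (0:ℝ) ≤ 1 + f x ^ 2 * 2 by positivity)]
  -- strict monotonicity of f
  have hmono : StrictMono f := by
    apply strictMono_of_deriv_pos
    intro x
    rw [(hf' x).deriv]
    positivity
  have hF0 : f 0 * Real.sqrt (1 + 2 * f 0 ^ 2) = 0 := by rw [hf0]; ring
  -- lower bound : t ≤ F t for t ≥ 0
  have hA : ∀ x : ℝ, 0 < x → x ≤ f x * Real.sqrt (1 + 2 * f x ^ 2) := by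
    intro x hx
    have hmonA : Monotone (fun y => f y * Real.sqrt (1 + 2 * f y ^ 2) - y) := by
      apply monotone_of_deriv_nonneg
      · intro y
        exact ((hF' y).sub (hasDerivAt_id' y)).differentiableAt
      · intro y
        have hd : HasDerivAt (fun y => f y * Real.sqrt (1 + 2 * f y ^ 2) - y)
            ((1 + 4 * f y ^ 2) / (1 + 2 * f y ^ 2) - 1) y :=
          (hF' y).sub (hasDerivAt_id' y)
        rw [hd.deriv]
        have : (1 : ℝ) ≤ (1 + 4 * f y ^ 2) / (1 + 2 * f y ^ 2) := by
          rw [le_div_iff₀ (hpos y)]; nlinarith [sq_nonneg (f y)]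
        simpa using this
    have := hmonA hx.le
    simp only [hF0] at this
    linarith
  -- upper bound : F t ≤ 2 t for t ≥ 0
  have hB : ∀ x : ℝ, 0 < x → f x * Real.sqrt (1 + 2 * f x ^ 2) ≤ 2 * x := by
    intro x hx
    have hmonB : Monotone (fun y => y - f y * Real.sqrt (1 + 2 * f y ^ 2) / 2) := by
      apply monotone_of_deriv_nonneg
      · intro y
        exact ((hasDerivAt_id' y).sub ((hF' y).div_const 2)).differentiableAt
      · intro y
        have hd : HasDerivAt (fun y => y - f y * Real.sqrt (1 + 2 * f y ^ 2) / 2)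
            (1 - (1 + 4 * f y ^ 2) / (1 + 2 * f y ^ 2) / 2) y :=
          (hasDerivAt_id' y).sub ((hF' y).div_const 2)
        rw [hd.deriv]
        have : (1 + 4 * f y ^ 2) / (1 + 2 * f y ^ 2) ≤ 2 := by
          rw [div_le_iff₀ (hpos y)]; nlinarith [sq_nonneg (f y)]
        linarith
    have := hmonB hx.le
    simp only [hF0] at this
    linarith
  -- the key bounds for positive t
  have key : ∀ t : ℝ, 0 < t →
      1 / 2 ≤ t * deriv f t / f t ∧ t * deriv f t / f t ≤ 1 := by
    intro t ht
    have hft : 0 < f t := by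
      have := hmono ht
      rwa [hf0] at this
    have hFt : 0 < f t * Real.sqrt (1 + 2 * f t ^ 2) := mul_pos hft (hsq t)
    have e : t * deriv f t / f t = t / (f t * Real.sqrt (1 + 2 * f t ^ 2)) := by
      rw [(hf' t).deriv]
      field_simp
    rw [e]
    constructor
    · rw [le_div_iff₀ hFt]
      nlinarith [hB t ht]
    · rw [div_le_one hFt]
      exact hA t ht
  -- evenness of the ratio
  have part1 : ∀ t : ℝ, t ≠ 0 →
      1 / 2 ≤ t * deriv f t / f t ∧ t * deriv f t / f t ≤ 1 := by
    intro t ht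
    rcases lt_or_gt_of_ne ht with h | h
    · have hu : 0 < -t := by linarith
      have hk := key (-t) hu
      have hft : f t < 0 := by
        have := hmono h
        rwa [hf0] at this
      have hsq' : f (-t) ^ 2 = f t ^ 2 := by rw [hfodd]; ring
      have e : (-t) * deriv f (-t) / f (-t) = t * deriv f t / f t := by
        rw [(hf' t).deriv, (hf' (-t)).deriv, hsq', hfodd]
        have s0 : Real.sqrt (1 + 2 * f t ^ 2) ≠ 0 := (hsq t).ne'
        field_simp
      rw [← e]
      exact hk
    · exact key t h
  refine ⟨part1, fun t s ht hs => ?_⟩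
  obtain ⟨-, h2⟩ := part1 t ht
  obtain ⟨h3, -⟩ := part1 s hs
  linarith
end

section
/- As |s| → +∞, f(s)²/s² → 0 and f(s)⁴/s² → 2; that is, for every ε > 0 there exists M > 0 such that |s| ≥ M implies f(s)²/s² < ε and |f(s)⁴/s² − 2| < ε. -/
open Real intervalIntegral

noncomputable def gg (y : ℝ) : ℝ := ∫ u in (0:ℝ)..y, Real.sqrt (1 + 2 * u ^ 2)

lemma cont_integrand : Continuous (fun u : ℝ => Real.sqrt (1 + 2 * u ^ 2)) :=
  (continuous_const.add (continuous_const.mul (continuous_pow 2))).sqrt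

lemma gg_hasDerivAt (y : ℝ) : HasDerivAt gg (Real.sqrt (1 + 2 * y ^ 2)) y :=
  intervalIntegral.integral_hasDerivAt_right
    (cont_integrand.intervalIntegrable 0 y)
    cont_integrand.aestronglyMeasurable.stronglyMeasurableAtFilter
    cont_integrand.continuousAt

lemma gg_f_eq (f : ℝ → ℝ) (hf0 : f 0 = 0)
    (hf' : ∀ t : ℝ, HasDerivAt f (1 / Real.sqrt (1 + 2 * f t ^ 2)) t) (t : ℝ) :
    gg (f t) = t := by
  have key : ∀ x : ℝ, HasDerivAt (fun u => gg (f u) - u) 0 x := by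
    intro x
    have h1 := (gg_hasDerivAt (f x)).comp x (hf' x)
    have hpos : (0:ℝ) < Real.sqrt (1 + 2 * f x ^ 2) := Real.sqrt_pos.mpr (by positivity)
    have h2 : Real.sqrt (1 + 2 * f x ^ 2) * (1 / Real.sqrt (1 + 2 * f x ^ 2)) = 1 := by
      field_simp
    rw [h2] at h1
    have h3 := h1.sub (hasDerivAt_id x)
    rw [sub_self] at h3
    exact h3
  have hconst := is_const_of_deriv_eq_zero
    (f := fun u => gg (f u) - u)
    (fun x => (key x).differentiableAt) (fun x => (key x).deriv) t 0
  have hg0 : gg (f 0) = 0 := by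
    rw [hf0]; simp [gg]
  simp only [hg0] at hconst
  linarith [hconst]

lemma f_mono (f : ℝ → ℝ)
    (hf' : ∀ t : ℝ, HasDerivAt f (1 / Real.sqrt (1 + 2 * f t ^ 2)) t) :
    StrictMono f := by
  apply strictMono_of_deriv_pos
  intro x
  rw [(hf' x).deriv]
  have : (0:ℝ) < Real.sqrt (1 + 2 * f x ^ 2) := Real.sqrt_pos.mpr (by positivity)
  positivity

lemma gg_lower (y : ℝ) (hy : 0 ≤ y) : Real.sqrt 2 / 2 * y ^ 2 ≤ gg y := by
  have h : ∀ u ∈ Set.Icc (0:ℝ) y, Real.sqrt 2 * u ≤ Real.sqrt (1 + 2 * u ^ 2) := by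
    intro u hu
    have hu0 : 0 ≤ u := hu.1
    have : Real.sqrt 2 * u = Real.sqrt (2 * u ^ 2) := by
      rw [Real.sqrt_mul (by norm_num), Real.sqrt_sq hu0]
    rw [this]
    exact Real.sqrt_le_sqrt (by linarith)
  have hmono := intervalIntegral.integral_mono_on (μ := MeasureTheory.volume) hy
    ((continuous_const.mul continuous_id').intervalIntegrable 0 y)
    (cont_integrand.intervalIntegrable 0 y) h
  have hcalc : (∫ u in (0:ℝ)..y, Real.sqrt 2 * u) = Real.sqrt 2 / 2 * y ^ 2 := by
    rw [intervalIntegral.integral_const_mul]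
    simp [integral_id]
    ring
  exact hcalc.symm.trans_le hmono

lemma gg_upper (y : ℝ) (hy : 0 ≤ y) : gg y ≤ y + Real.sqrt 2 / 2 * y ^ 2 := by
  have h : ∀ u ∈ Set.Icc (0:ℝ) y, Real.sqrt (1 + 2 * u ^ 2) ≤ 1 + Real.sqrt 2 * u := by
    intro u hu
    have hu0 : 0 ≤ u := hu.1
    have hs2 : Real.sqrt 2 ^ 2 = 2 := Real.sq_sqrt (by norm_num)
    have hb : 1 + 2 * u ^ 2 ≤ (1 + Real.sqrt 2 * u) ^ 2 := by
      have h2 : 0 ≤ Real.sqrt 2 * u := by positivity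
      nlinarith [hs2]
    calc Real.sqrt (1 + 2 * u ^ 2) ≤ Real.sqrt ((1 + Real.sqrt 2 * u) ^ 2) :=
          Real.sqrt_le_sqrt hb
      _ = 1 + Real.sqrt 2 * u := Real.sqrt_sq (by positivity)
  have hmono := intervalIntegral.integral_mono_on (μ := MeasureTheory.volume) hy
    (cont_integrand.intervalIntegrable 0 y)
    ((continuous_const.add (continuous_const.mul continuous_id')).intervalIntegrable 0 y) h
  have hcalc : (∫ u in (0:ℝ)..y, (1 + Real.sqrt 2 * u)) = y + Real.sqrt 2 / 2 * y ^ 2 := by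
    rw [intervalIntegral.integral_add (f := fun _ => (1:ℝ)) (g := fun u => Real.sqrt 2 * u) (continuous_const.intervalIntegrable 0 y)
      ((continuous_const.mul continuous_id').intervalIntegrable 0 y),
      intervalIntegral.integral_const_mul]
    simp [integral_id]
    ring
  exact hmono.trans_eq hcalc

set_option maxHeartbeats 1000000 in
/-- As `|s| → +∞`, `f(s)²/s² → 0` and `f(s)⁴/s² → 2`. -/
theorem stmt_12 (f : ℝ → ℝ) (hf0 : f 0 = 0)
    (hfodd : ∀ t : ℝ, f (-t) = -f t)
    (hf' : ∀ t : ℝ, HasDerivAt f (1 / Real.sqrt (1 + 2 * f t ^ 2)) t) :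
    ∀ ε : ℝ, 0 < ε → ∃ M : ℝ, 0 < M ∧ ∀ s : ℝ, M ≤ |s| →
      f s ^ 2 / s ^ 2 < ε ∧ |f s ^ 4 / s ^ 2 - 2| < ε := by
  intro ε hε
  refine ⟨max 2 (max (2 / ε) (64 / ε ^ 2)) + 1, by positivity, ?_⟩
  intro s hs
  -- reduce to s = |s| ≥ 0
  have habs2 : f s ^ 2 = f |s| ^ 2 := by
    rcases abs_choice s with h | h
    · rw [h]
    · rw [h, hfodd]; ring
  have habs4 : f s ^ 4 = f |s| ^ 4 := by
    rcases abs_choice s with h | h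
    · rw [h]
    · rw [h, hfodd]; ring
  have hsq : s ^ 2 = |s| ^ 2 := (sq_abs s).symm
  rw [habs2, habs4, hsq]
  set r : ℝ := |s| with hr
  have hr2 : 2 < r := lt_of_lt_of_le (by
    have := le_max_left (2:ℝ) (max (2 / ε) (64 / ε ^ 2)); linarith) hs
  have hrε : 2 / ε < r := lt_of_lt_of_le (by
    have h1 := le_max_left (2 / ε) (64 / ε ^ 2)
    have h2 := le_max_right (2:ℝ) (max (2 / ε) (64 / ε ^ 2)); linarith) hs
  have hrε2 : 64 / ε ^ 2 < r := lt_of_lt_of_le (by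
    have h1 := le_max_right (2 / ε) (64 / ε ^ 2)
    have h2 := le_max_right (2:ℝ) (max (2 / ε) (64 / ε ^ 2)); linarith) hs
  have hr0 : 0 < r := by linarith
  set y : ℝ := f r with hy
  have hy0 : 0 ≤ y := by
    have h := (f_mono f hf').monotone hr0.le
    rw [hf0] at h; exact h
  have hgr : gg y = r := gg_f_eq f hf0 hf' r
  have hlow : Real.sqrt 2 / 2 * y ^ 2 ≤ r := hgr ▸ gg_lower y hy0
  have hupp : r ≤ y + Real.sqrt 2 / 2 * y ^ 2 := hgr ▸ gg_upper y hy0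
  have hs2 : Real.sqrt 2 ^ 2 = 2 := Real.sq_sqrt (by norm_num)
  have hs2pos : (0:ℝ) < Real.sqrt 2 := Real.sqrt_pos.mpr (by norm_num)
  have hs2lt : Real.sqrt 2 < 2 := by nlinarith
  have h1 : y ^ 2 ≤ Real.sqrt 2 * r := by nlinarith
  have h1' : y ^ 2 ≤ 2 * r := by nlinarith
  have hyr : y ≤ r := by nlinarith
  set t : ℝ := Real.sqrt r with ht
  have ht2 : t ^ 2 = r := Real.sq_sqrt hr0.le
  have ht0 : 0 < t := Real.sqrt_pos.mpr hr0
  have hteps : 8 < ε * t := by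
    have h64 : (8 / ε) ^ 2 < r := by
      have heq : (8 / ε) ^ 2 = 64 / ε ^ 2 := by rw [div_pow]; norm_num
      rw [heq]; exact hrε2
    have h8t : 8 / ε < t := Real.lt_sqrt_of_sq_lt h64
    rw [div_lt_iff₀ hε] at h8t; linarith
  have hyt : y ≤ Real.sqrt 2 * t := by
    have h := Real.sqrt_le_sqrt h1'
    rw [Real.sqrt_mul (by norm_num) r, Real.sqrt_sq hy0] at h
    exact h
  have hy2t : y ≤ 2 * t := le_trans hyt (by nlinarith)
  have hrpos2 : (0:ℝ) < r ^ 2 := by positivity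
  constructor
  · rw [div_lt_iff₀ hrpos2]
    have hεr : 2 < ε * r := by rw [div_lt_iff₀ hε] at hrε; linarith
    nlinarith [mul_lt_mul_of_pos_right hεr hr0]
  · rw [abs_lt]
    have h14 := pow_le_pow_left₀ (sq_nonneg y) h1 2
    have hupp4 : y ^ 4 ≤ 2 * r ^ 2 := by nlinarith [h14]
    constructor
    · have hry : r - y ≤ Real.sqrt 2 / 2 * y ^ 2 := by linarith
      have h5 := pow_le_pow_left₀ (by linarith : (0:ℝ) ≤ r - y) hry 2
      have h6 : 2 * r ^ 2 - y ^ 4 ≤ 4 * (r * y) := by nlinarith [h5]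
      have h7 : 4 * (r * y) ≤ 8 * t ^ 3 := by nlinarith [hy2t, ht0, ht2]
      have h8 : 8 * t ^ 3 < ε * t ^ 4 := by nlinarith [mul_lt_mul_of_pos_right hteps (pow_pos ht0 3)]
      have h9 : 2 - ε < y ^ 4 / r ^ 2 := by
        rw [lt_div_iff₀ hrpos2]
        have hrt : r ^ 2 = t ^ 4 := by nlinarith [ht2]
        nlinarith
      linarith
    · have : y ^ 4 / r ^ 2 ≤ 2 := by
        rw [div_le_iff₀ hrpos2]; linarith
      linarith
end

section
/- Let G : ℝ → ℝ satisfy lim_{|t|→+∞} G(t)/t⁴ = +∞ (i.e., for every A > 0 there exists M > 0 such that |t| ≥ M implies G(t)/t⁴ ≥ A). Then lim_{|s|→+∞} G(f(s))/s² = +∞, i.e., for every A > 0 there exists M' > 0 such that |s| ≥ M' implies G(f(s))/s² ≥ A. -/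
/-- If `G(t)/t⁴ → +∞` as `|t| → +∞`, then `G(f(s))/s² → +∞` as `|s| → +∞`. -/
theorem stmt_13 (f : ℝ → ℝ) (hf0 : f 0 = 0)
    (hfodd : ∀ t : ℝ, f (-t) = -f t)
    (hf' : ∀ t : ℝ, HasDerivAt f (1 / Real.sqrt (1 + 2 * f t ^ 2)) t)
    (G : ℝ → ℝ)
    (hG : ∀ A : ℝ, 0 < A → ∃ M : ℝ, 0 < M ∧ ∀ t : ℝ, M ≤ |t| → A ≤ G t / t ^ 4) :
    ∀ A : ℝ, 0 < A → ∃ M' : ℝ, 0 < M' ∧ ∀ s : ℝ, M' ≤ |s| → A ≤ G (f s) / s ^ 2 := by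
  have hs2 : Real.sqrt 2 ^ 2 = 2 := Real.sq_sqrt (by norm_num)
  have hs2nn : (0:ℝ) ≤ Real.sqrt 2 := Real.sqrt_nonneg 2
  have hs2le : Real.sqrt 2 ≤ 2 := by nlinarith
  have hfc : ∀ t : ℝ, 0 < Real.sqrt (1 + 2 * f t ^ 2) := fun t =>
    Real.sqrt_pos.2 (by positivity)
  -- f is monotone
  have hfmono : Monotone f := by
    have : StrictMono f := by
      apply strictMono_of_deriv_pos
      intro t
      rw [(hf' t).deriv]
      exact div_pos one_pos (hfc t)
    exact this.monotone
  have hfnn : ∀ s : ℝ, 0 ≤ s → 0 ≤ f s := fun s hs => by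
    have := hfmono hs; rwa [hf0] at this
  -- the auxiliary function g and its derivative
  set g : ℝ → ℝ := fun s => f s + Real.sqrt 2 * f s ^ 2 - s with hgdef
  have hg' : ∀ s : ℝ, HasDerivAt g
      (1 / Real.sqrt (1 + 2 * f s ^ 2)
        + Real.sqrt 2 * (2 * f s ^ 1 * (1 / Real.sqrt (1 + 2 * f s ^ 2))) - 1) s := by
    intro s
    have h1 := (hf' s).pow 2
    norm_num at h1
    have h2 := h1.const_mul (Real.sqrt 2)
    have h3 := (hf' s).add h2
    have h4 := h3.sub (hasDerivAt_id s)
    have h5 : 1 / Real.sqrt (1 + 2 * f s ^ 2)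
        + Real.sqrt 2 * (2 * f s ^ 1 * (1 / Real.sqrt (1 + 2 * f s ^ 2))) - 1
        = 1 / Real.sqrt (1 + 2 * f s ^ 2)
        + Real.sqrt 2 * (2 * f s * (Real.sqrt (1 + 2 * f s ^ 2))⁻¹) - 1 := by ring
    rw [h5]
    exact h4
  have hgcont : Continuous g := by
    have : Differentiable ℝ g := fun s => (hg' s).differentiableAt
    exact this.continuous
  -- g is monotone on [0, ∞)
  have hgmono : MonotoneOn g (Set.Ici (0:ℝ)) := by
    apply monotoneOn_of_deriv_nonneg (convex_Ici 0) hgcont.continuousOn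
    · intro s hs
      exact (hg' s).differentiableAt.differentiableWithinAt
    · intro s hs
      rw [interior_Ici] at hs
      have hfs : 0 ≤ f s := hfnn s hs.le
      rw [(hg' s).deriv]
      have hD := hfc s
      have key : Real.sqrt (1 + 2 * f s ^ 2) ≤ 1 + 2 * Real.sqrt 2 * f s := by
        rw [show (1 + 2 * Real.sqrt 2 * f s)
            = Real.sqrt ((1 + 2 * Real.sqrt 2 * f s) ^ 2) from
          (Real.sqrt_sq (by positivity)).symm]
        apply Real.sqrt_le_sqrt
        nlinarith
      have heq : 1 / Real.sqrt (1 + 2 * f s ^ 2)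
          + Real.sqrt 2 * (2 * f s ^ 1 * (1 / Real.sqrt (1 + 2 * f s ^ 2)))
          = (1 + 2 * Real.sqrt 2 * f s) / Real.sqrt (1 + 2 * f s ^ 2) := by
        field_simp
      rw [heq]
      have : 1 ≤ (1 + 2 * Real.sqrt 2 * f s) / Real.sqrt (1 + 2 * f s ^ 2) :=
        (one_le_div hD).2 key
      linarith
  -- key inequality: s ≤ f s + √2 (f s)^2 for s ≥ 0
  have hkey : ∀ s : ℝ, 0 ≤ s → s ≤ f s + Real.sqrt 2 * f s ^ 2 := by
    intro s hs
    have h := hgmono (Set.self_mem_Ici) (Set.mem_Ici.2 hs) hs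
    simp only [hgdef, hf0] at h
    nlinarith [h]
  -- main argument
  intro A hA
  obtain ⟨M₁, hM₁pos, hM₁⟩ := hG (9 * A) (by linarith)
  set c := max M₁ 1 with hcdef
  have hc1 : (1:ℝ) ≤ c := le_max_right _ _
  have hc0 : (0:ℝ) < c := lt_of_lt_of_le one_pos hc1
  refine ⟨c + Real.sqrt 2 * c ^ 2, by positivity, ?_⟩
  intro s hs
  set σ := |s| with hσdef
  have hσ0 : 0 ≤ σ := abs_nonneg s
  have hk := hkey σ hσ0
  have hfσ0 : 0 ≤ f σ := hfnn σ hσ0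
  have hfσc : c ≤ f σ := by
    by_contra h
    push_neg at h
    nlinarith [hs, hk, sq_nonneg (c - f σ)]
  have hfσ1 : (1:ℝ) ≤ f σ := le_trans hc1 hfσc
  -- |f s| = f σ and (f s)^4 = (f σ)^4
  have habs : |f s| = f σ ∧ f s ^ 4 = f σ ^ 4 := by
    rcases le_or_gt 0 s with h | h
    · have hσs : σ = s := abs_of_nonneg h
      rw [hσs]
      exact ⟨abs_of_nonneg (by rw [← hσs]; linarith), rfl⟩
    · have hσs : σ = -s := abs_of_neg h
      have hfs : f s = - f σ := by
        rw [hσs, hfodd]; ring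
      constructor
      · rw [hfs, abs_neg, abs_of_nonneg hfσ0]
      · rw [hfs]; ring
  obtain ⟨habs1, habs2⟩ := habs
  have hGfs : 9 * A ≤ G (f s) / f s ^ 4 := by
    apply hM₁
    rw [habs1]
    exact le_trans (le_max_left _ _) hfσc
  -- bounds
  have hσle : σ ≤ 3 * f σ ^ 2 := by nlinarith
  have hσ2 : σ ^ 2 ≤ 9 * f σ ^ 4 := by nlinarith
  have hfσ4pos : (0:ℝ) < f σ ^ 4 := by positivity
  have hGlb : 9 * A * f σ ^ 4 ≤ G (f s) := by
    rw [habs2] at hGfs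
    exact (le_div_iff₀ hfσ4pos).1 hGfs
  have hσpos : 0 < σ := by nlinarith
  have hs2σ : s ^ 2 = σ ^ 2 := (sq_abs s).symm
  rw [le_div_iff₀ (by rw [hs2σ]; positivity), hs2σ]
  nlinarith
end

section
/- Let p ∈ (2, 12), let g : ℝ → ℝ be continuous with lim_{t→0} g(t)/t = 0 and limsup_{|t|→+∞} |g(t)|/|t|^(p−1) < +∞, and let V : ℝ³ → ℝ be continuous and bounded with inf_{x∈ℝ³} V(x) > 0. Define g̃(x,t) = g(f(t))·f'(t) − V(x)·f(t)·f'(t) + V(x)·t and set q = max{3, p/2}. Then for every ε > 0 there exists C_ε > 0 such that |g̃(x,t)| ≤ ε·|t| + C_ε·|t|^(q−1) for all x ∈ ℝ³ and all t ∈ ℝ. -/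
open Filter Topology

lemma deriv_bound_aux {φ φ' : ℝ → ℝ} (h : ∀ s, HasDerivAt φ (φ' s) s)
    (h0 : φ 0 = 0) {C : ℝ} (t : ℝ) (hC : ∀ s, |s| ≤ |t| → |φ' s| ≤ C) :
    |φ t| ≤ C * |t| := by
  have hsub : ∀ s ∈ Set.uIcc (0:ℝ) t, |s| ≤ |t| := by
    intro s hs
    rcases le_total (0:ℝ) t with h' | h'
    · rw [Set.uIcc_of_le h'] at hs
      rw [abs_of_nonneg hs.1, abs_of_nonneg h']; exact hs.2
    · rw [Set.uIcc_of_ge h'] at hs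
      rw [abs_of_nonpos hs.2, abs_of_nonpos h']; linarith [hs.1]
  have := Convex.norm_image_sub_le_of_norm_hasDerivWithin_le
    (f := φ) (f' := φ') (s := Set.uIcc 0 t)
    (fun s hs => (h s).hasDerivWithinAt)
    (fun s hs => hC s (hsub s hs))
    (convex_uIcc 0 t) Set.left_mem_uIcc Set.right_mem_uIcc
  simpa [h0, Real.norm_eq_abs] using this

section ffacts
variable {f : ℝ → ℝ} (hf0 : f 0 = 0)
    (hf' : ∀ t : ℝ, HasDerivAt f (1 / Real.sqrt (1 + 2 * f t ^ 2)) t)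

lemma sqrt_ge_one (t : ℝ) : 1 ≤ Real.sqrt (1 + 2 * f t ^ 2) := by
  have := Real.sqrt_le_sqrt (show (1:ℝ) ≤ 1 + 2 * f t ^ 2 by nlinarith [sq_nonneg (f t)])
  simpa using this

lemma Dpos (t : ℝ) : 0 < 1 / Real.sqrt (1 + 2 * f t ^ 2) :=
  by positivity

lemma Dle1 (t : ℝ) : 1 / Real.sqrt (1 + 2 * f t ^ 2) ≤ 1 := by
  have h := sqrt_ge_one (f := f) t
  rw [div_le_one (by linarith)]; exact h

include hf0 hf' in
lemma fabs_le : ∀ t, |f t| ≤ |t| := by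
  intro t
  have := deriv_bound_aux hf' hf0 (C := 1) t (fun s _ => by
    rw [abs_of_pos (Dpos s)]; exact Dle1 s)
  simpa using this

lemma sqrt_ge_f (t : ℝ) : Real.sqrt 2 * |f t| ≤ Real.sqrt (1 + 2 * f t ^ 2) := by
  have h1 := Real.sq_sqrt (show (0:ℝ) ≤ 1 + 2 * f t ^ 2 by positivity)
  have h2 := Real.sqrt_nonneg (1 + 2 * f t ^ 2)
  have h3 := Real.sq_sqrt (show (0:ℝ) ≤ 2 by norm_num)
  have h4 := Real.sqrt_nonneg 2
  have h5 := abs_nonneg (f t)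
  have h6 := sq_abs (f t)
  nlinarith [sq_nonneg (Real.sqrt (1 + 2 * f t ^ 2) - Real.sqrt 2 * |f t|),
    sq_nonneg (Real.sqrt (1 + 2 * f t ^ 2) + Real.sqrt 2 * |f t|)]

include hf0 hf' in
lemma fsq_le : ∀ t, f t ^ 2 ≤ Real.sqrt 2 * |t| := by
  intro t
  have hD : ∀ s, HasDerivAt (fun u => f u ^ 2)
      (2 * f s * (1 / Real.sqrt (1 + 2 * f s ^ 2))) s := by
    intro s
    have : HasDerivAt (fun u => f u ^ 2) _ s := (hf' s).pow 2
    convert this using 1; ring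
  have hb : ∀ s, |s| ≤ |t| →
      |2 * f s * (1 / Real.sqrt (1 + 2 * f s ^ 2))| ≤ Real.sqrt 2 := by
    intro s _
    have hS := sqrt_ge_one (f := f) s
    have hSf := sqrt_ge_f (f := f) s
    rw [abs_mul, abs_of_pos (Dpos s)]
    rw [mul_one_div, div_le_iff₀ (by linarith)]
    calc |2 * f s| = 2 * |f s| := by rw [abs_mul]; norm_num
    _ ≤ Real.sqrt 2 * Real.sqrt (1 + 2 * f s ^ 2) := by
        nlinarith [Real.sqrt_nonneg 2, abs_nonneg (f s),
          Real.sq_sqrt (show (0:ℝ) ≤ 2 by norm_num)]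
  have := deriv_bound_aux hD (by simp [hf0]) t hb
  calc f t ^ 2 = |f t ^ 2| := (abs_of_nonneg (sq_nonneg _)).symm
  _ ≤ Real.sqrt 2 * |t| := this

include hf0 hf' in
lemma one_sub_D_le (s : ℝ) : 1 - 1 / Real.sqrt (1 + 2 * f s ^ 2) ≤ 2 * f s ^ 2 := by
  have hS := sqrt_ge_one (f := f) s
  have h1 : 1 / Real.sqrt (1 + 2 * f s ^ 2) ≥ 1 / (1 + 2 * f s ^ 2) := by
    apply one_div_le_one_div_of_le (by linarith)
    nlinarith [Real.sq_sqrt (show (0:ℝ) ≤ 1 + 2 * f s ^ 2 by positivity)]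
  have h2 : 1 - 1 / (1 + 2 * f s ^ 2) ≤ 2 * f s ^ 2 := by
    have hx : (0:ℝ) < 1 + 2 * f s ^ 2 := by positivity
    have hinv : (1 + 2 * f s ^ 2) * (1 / (1 + 2 * f s ^ 2)) = 1 :=
      mul_one_div_cancel (ne_of_gt hx)
    nlinarith [sq_nonneg (f s), one_div_nonneg.mpr hx.le]
  linarith

include hf0 hf' in
lemma vterm_le : ∀ t, |t - f t * (1 / Real.sqrt (1 + 2 * f t ^ 2))| ≤ 4 * t ^ 2 * |t| := by
  intro t
  have hfa := fabs_le hf0 hf'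
  have hfsq : ∀ s, f s ^ 2 ≤ s ^ 2 := by
    intro s
    have := hfa s
    nlinarith [abs_nonneg (f s), sq_abs (f s), sq_abs s]
  have part1 : |t - f t| ≤ (2 * t ^ 2) * |t| := by
    have hD : ∀ s, HasDerivAt (fun u => u - f u)
        (1 - 1 / Real.sqrt (1 + 2 * f s ^ 2)) s :=
      fun s => (hasDerivAt_id s).sub (hf' s)
    apply deriv_bound_aux hD (by simp [hf0]) t
    intro s hs
    have h1 := one_sub_D_le hf0 hf' s
    have h2 := Dle1 (f := f) s
    have h3 : s ^ 2 ≤ t ^ 2 := by nlinarith [abs_nonneg s, sq_abs s, sq_abs t]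
    rw [abs_of_nonneg (by linarith)]
    have := hfsq s
    linarith
  have part2 : |f t * (1 - 1 / Real.sqrt (1 + 2 * f t ^ 2))| ≤ |t| * (2 * t ^ 2) := by
    rw [abs_mul]
    apply mul_le_mul (hfa t) ?_ (abs_nonneg _) (abs_nonneg _)
    rw [abs_of_nonneg (by linarith [Dle1 (f := f) t])]
    have := one_sub_D_le hf0 hf' t
    have := hfsq t
    linarith
  calc |t - f t * (1 / Real.sqrt (1 + 2 * f t ^ 2))|
      = |(t - f t) + f t * (1 - 1 / Real.sqrt (1 + 2 * f t ^ 2))| := by ring_nf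
    _ ≤ |t - f t| + |f t * (1 - 1 / Real.sqrt (1 + 2 * f t ^ 2))| := abs_add_le _ _
    _ ≤ (2 * t ^ 2) * |t| + |t| * (2 * t ^ 2) := add_le_add part1 part2
    _ = 4 * t ^ 2 * |t| := by ring

end ffacts

lemma g_zero (g : ℝ → ℝ) (hg : Continuous g)
    (hg0 : Tendsto (fun t : ℝ => g t / t) (𝓝[≠] 0) (𝓝 0)) : g 0 = 0 := by
  have hid : Tendsto (fun s : ℝ => s) (𝓝[≠] (0:ℝ)) (𝓝 0) :=
    tendsto_id.mono_left nhdsWithin_le_nhds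
  have h2 := hg0.mul hid
  rw [mul_zero] at h2
  have h1 : Tendsto g (𝓝[≠] (0:ℝ)) (𝓝 0) := by
    refine h2.congr' ?_
    filter_upwards [self_mem_nhdsWithin] with s hs
    exact div_mul_cancel₀ _ hs
  exact tendsto_nhds_unique ((hg.tendsto 0).mono_left nhdsWithin_le_nhds) h1

lemma g_small (g : ℝ → ℝ)
    (hg0 : Tendsto (fun t : ℝ => g t / t) (𝓝[≠] 0) (𝓝 0)) (hgz : g 0 = 0)
    {ε : ℝ} (hε : 0 < ε) : ∃ δ > (0:ℝ), ∀ s, |s| ≤ δ → |g s| ≤ ε * |s| := by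
  rw [Metric.tendsto_nhdsWithin_nhds] at hg0
  obtain ⟨δ, hδ, h⟩ := hg0 ε hε
  refine ⟨δ/2, by linarith, fun s hs => ?_⟩
  by_cases h0 : s = 0
  · simp [h0, hgz]
  · have hb := h (x := s) (by simpa using h0)
      (by rw [Real.dist_eq, sub_zero]; linarith)
    rw [Real.dist_eq, sub_zero, abs_div] at hb
    have hs0 : 0 < |s| := abs_pos.mpr h0
    calc |g s| = |g s| / |s| * |s| := by field_simp
    _ ≤ ε * |s| := mul_le_mul_of_nonneg_right hb.le (abs_nonneg s)

set_option maxHeartbeats 1000000 in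
/-- For `g̃(x,t) = g(f(t)) f'(t) − V(x) f(t) f'(t) + V(x) t` and `q = max{3, p/2}`:
for every `ε > 0` there exists `C_ε > 0` such that
`|g̃(x,t)| ≤ ε|t| + C_ε |t|^(q−1)` for all `x ∈ ℝ³`, `t ∈ ℝ`. -/
theorem stmt_16 (f : ℝ → ℝ) (hf0 : f 0 = 0)
    (hfodd : ∀ t : ℝ, f (-t) = -f t)
    (hf' : ∀ t : ℝ, HasDerivAt f (1 / Real.sqrt (1 + 2 * f t ^ 2)) t)
    (p : ℝ) (hp2 : 2 < p) (hp12 : p < 12)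
    (g : ℝ → ℝ) (hg : Continuous g)
    (hg0 : Tendsto (fun t : ℝ => g t / t) (𝓝[≠] 0) (𝓝 0))
    (hginf : ∃ K M : ℝ, 0 < K ∧ 0 < M ∧ ∀ t : ℝ, M ≤ |t| → |g t| ≤ K * |t| ^ (p - 1))
    (V : EuclideanSpace ℝ (Fin 3) → ℝ) (hV : Continuous V)
    (hVbdd : ∃ B : ℝ, ∀ x, V x ≤ B)
    (hVpos : ∃ V₀ : ℝ, 0 < V₀ ∧ ∀ x, V₀ ≤ V x) :
    ∀ ε : ℝ, 0 < ε → ∃ C : ℝ, 0 < C ∧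
      ∀ (x : EuclideanSpace ℝ (Fin 3)) (t : ℝ),
        |g (f t) * deriv f t - V x * (f t * deriv f t) + V x * t| ≤
          ε * |t| + C * |t| ^ (max 3 (p / 2) - 1) := by
  intro ε hε
  obtain ⟨K, M, hK, hM, hKM⟩ := hginf
  obtain ⟨B, hB⟩ := hVbdd
  obtain ⟨V₀, hV₀, hV₀le⟩ := hVpos
  have hB0 : 0 < B := lt_of_lt_of_le hV₀ ((hV₀le 0).trans (hB 0))
  set q := max (3:ℝ) (p/2) with hq
  have hq3 : (3:ℝ) ≤ q := le_max_left _ _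
  have hqp : p/2 ≤ q := le_max_right _ _
  have hgz := g_zero g hg hg0
  obtain ⟨δ, hδ, hsmall⟩ := g_small g hg0 hgz (half_pos hε)
  have hD : ∀ t, deriv f t = 1 / Real.sqrt (1 + 2 * f t ^ 2) := fun t => (hf' t).deriv
  have hfa := fabs_le hf0 hf'
  have hfsq := fsq_le hf0 hf'
  have hvt := vterm_le hf0 hf'
  set R := max 1 M with hR
  obtain ⟨G, hG⟩ := (isCompact_Icc (a := -R) (b := R)).exists_bound_of_continuousOn
    hg.continuousOn
  set δ₂ := min 1 (Real.sqrt (ε / (8 * B))) with hδ₂def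
  have hδ₂pos : 0 < δ₂ := lt_min one_pos (Real.sqrt_pos.mpr (by positivity))
  set C₁ := (|G| + 1) / δ ^ (q - 1) with hC₁
  set C₂ := K * Real.sqrt 2 ^ ((p - 2) / 2) with hC₂
  set C₃ := 2 * B / δ₂ ^ (q - 2) with hC₃
  have hδq1 : (0:ℝ) < δ ^ (q - 1) := Real.rpow_pos_of_pos hδ _
  have hδ₂q2 : (0:ℝ) < δ₂ ^ (q - 2) := Real.rpow_pos_of_pos hδ₂pos _
  have hsqrt2 : (1:ℝ) ≤ Real.sqrt 2 := by
    rw [show (1:ℝ) = Real.sqrt 1 by simp]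
    exact Real.sqrt_le_sqrt (by norm_num)
  have hC₁pos : 0 < C₁ := div_pos (by positivity) hδq1
  have hC₂pos : 0 < C₂ := mul_pos hK (Real.rpow_pos_of_pos (by linarith) _)
  have hC₃pos : 0 < C₃ := div_pos (by positivity) hδ₂q2
  refine ⟨C₁ + C₂ + C₃, by positivity, fun x t => ?_⟩
  have hVx : |V x| ≤ B := by
    rw [abs_of_pos (lt_of_lt_of_le hV₀ (hV₀le x))]; exact hB x
  have hrq : (0:ℝ) ≤ |t| ^ (q - 1) := Real.rpow_nonneg (abs_nonneg t) _
  have hDpos' : 0 < deriv f t := by rw [hD t]; exact Dpos t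
  have hD1' : deriv f t ≤ 1 := by rw [hD t]; exact Dle1 t
  have hsplit : |g (f t) * deriv f t - V x * (f t * deriv f t) + V x * t|
      ≤ |g (f t)| * deriv f t + B * |t - f t * deriv f t| := by
    have h1 : g (f t) * deriv f t - V x * (f t * deriv f t) + V x * t
        = g (f t) * deriv f t + V x * (t - f t * deriv f t) := by ring
    rw [h1]
    refine (abs_add_le _ _).trans ?_
    rw [abs_mul, abs_mul, abs_of_pos hDpos']
    gcongr
  have hgpart : |g (f t)| * deriv f t ≤ ε/2 * |t| + (C₁ + C₂) * |t| ^ (q - 1) := by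
    have hnn12 : (0:ℝ) ≤ (C₁ + C₂) * |t| ^ (q - 1) := mul_nonneg (by linarith) hrq
    by_cases hcase : |f t| ≤ δ
    · have h1 := hsmall (f t) hcase
      have h2 : |g (f t)| * deriv f t ≤ ε/2 * |t| := by
        calc |g (f t)| * deriv f t ≤ (ε/2 * |f t|) * 1 :=
            mul_le_mul h1 hD1' hDpos'.le (by positivity)
        _ = ε/2 * |f t| := mul_one _
        _ ≤ ε/2 * |t| := by have := hfa t; nlinarith
      linarith
    · push_neg at hcase
      have htδ : δ ≤ |t| := hcase.le.trans (hfa t)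
      have htnn : (0:ℝ) ≤ ε/2 * |t| := by positivity
      by_cases hbig : M ≤ |f t| ∧ 1 ≤ |t|
      · have h1 : |g (f t)| ≤ K * |f t| ^ (p - 1) := hKM (f t) hbig.1
        have hfpos : 0 < |f t| := lt_of_lt_of_le hM hbig.1
        have hDle : deriv f t ≤ 1 / (Real.sqrt 2 * |f t|) := by
          rw [hD t]
          exact one_div_le_one_div_of_le (by positivity) (sqrt_ge_f t)
        have step : |g (f t)| * deriv f t
            ≤ K * |f t| ^ (p - 1) * (1 / (Real.sqrt 2 * |f t|)) :=
          mul_le_mul h1 hDle hDpos'.le (by positivity)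
        have hrp1 : (0:ℝ) < |f t| ^ (p - 1) := Real.rpow_pos_of_pos hfpos _
        have hpow : |f t| ^ (p - 1) = |f t| ^ (p - 2) * |f t| := by
          rw [show p - 1 = (p - 2) + 1 by ring, Real.rpow_add_one (ne_of_gt hfpos)]
        have step2 : K * |f t| ^ (p - 1) * (1 / (Real.sqrt 2 * |f t|))
            ≤ K * |f t| ^ (p - 2) := by
          rw [hpow, show K * (|f t| ^ (p - 2) * |f t|) * (1 / (Real.sqrt 2 * |f t|))
              = K * |f t| ^ (p - 2) * (|f t| / |f t|) / Real.sqrt 2 by ring,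
            div_self (ne_of_gt hfpos), mul_one]
          rw [div_le_iff₀ (by linarith : (0:ℝ) < Real.sqrt 2)]
          nlinarith [mul_nonneg hK.le (Real.rpow_pos_of_pos hfpos (p - 2)).le]
        have h2 : |f t| ^ (p - 2) = (f t ^ 2) ^ ((p - 2) / 2) := by
          rw [← sq_abs, ← Real.rpow_natCast |f t| 2, ← Real.rpow_mul (abs_nonneg _)]
          norm_num
          congr 1
          ring
        have h3 : (f t ^ 2) ^ ((p - 2) / 2) ≤ (Real.sqrt 2 * |t|) ^ ((p - 2) / 2) :=
          Real.rpow_le_rpow (sq_nonneg _) (hfsq t) (by linarith)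
        have h4 : (Real.sqrt 2 * |t|) ^ ((p - 2) / 2)
            = Real.sqrt 2 ^ ((p - 2) / 2) * |t| ^ ((p - 2) / 2) :=
          Real.mul_rpow (Real.sqrt_nonneg 2) (abs_nonneg t)
        have h5 : |t| ^ ((p - 2) / 2) ≤ |t| ^ (q - 1) :=
          Real.rpow_le_rpow_of_exponent_le hbig.2 (by linarith)
        have h6 : |g (f t)| * deriv f t ≤ C₂ * |t| ^ (q - 1) := by
          calc |g (f t)| * deriv f t ≤ K * |f t| ^ (p - 2) := step.trans step2
          _ = K * ((f t ^ 2) ^ ((p - 2) / 2)) := by rw [h2]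
          _ ≤ K * (Real.sqrt 2 ^ ((p - 2) / 2) * |t| ^ ((p - 2) / 2)) := by
              rw [← h4]; exact mul_le_mul_of_nonneg_left h3 hK.le
          _ = C₂ * |t| ^ ((p - 2) / 2) := by rw [hC₂]; ring
          _ ≤ C₂ * |t| ^ (q - 1) := mul_le_mul_of_nonneg_left h5 hC₂pos.le
        have h7 : C₂ * |t| ^ (q - 1) ≤ (C₁ + C₂) * |t| ^ (q - 1) := by
          apply mul_le_mul_of_nonneg_right (by linarith) hrq
        linarith
      · have hfR : |f t| ≤ R := by
          rcases not_and_or.mp hbig with h | h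
          · push_neg at h; exact h.le.trans (le_max_right 1 M)
          · push_neg at h; exact (hfa t).trans (h.le.trans (le_max_left 1 M))
        have hmem : f t ∈ Set.Icc (-R) R := by
          rcases abs_le.mp hfR with ⟨ha, hb'⟩; exact ⟨ha, hb'⟩
        have hGb : |g (f t)| ≤ |G| + 1 := by
          have := hG _ hmem
          rw [Real.norm_eq_abs] at this
          linarith [le_abs_self G]
        have hδq : δ ^ (q - 1) ≤ |t| ^ (q - 1) :=
          Real.rpow_le_rpow hδ.le htδ (by linarith)
        have h6 : |g (f t)| * deriv f t ≤ C₁ * |t| ^ (q - 1) := by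
          calc |g (f t)| * deriv f t ≤ (|G| + 1) * 1 :=
            mul_le_mul hGb hD1' hDpos'.le (by positivity)
          _ = C₁ * δ ^ (q - 1) := by rw [hC₁]; field_simp
          _ ≤ C₁ * |t| ^ (q - 1) := mul_le_mul_of_nonneg_left hδq hC₁pos.le
        have h7 : C₁ * |t| ^ (q - 1) ≤ (C₁ + C₂) * |t| ^ (q - 1) :=
          mul_le_mul_of_nonneg_right (by linarith) hrq
        linarith
  have hvpart : B * |t - f t * deriv f t| ≤ ε/2 * |t| + C₃ * |t| ^ (q - 1) := by
    have hnn3 : (0:ℝ) ≤ C₃ * |t| ^ (q - 1) := mul_nonneg hC₃pos.le hrq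
    have hvt' : |t - f t * deriv f t| ≤ 4 * t ^ 2 * |t| := by rw [hD t]; exact hvt t
    by_cases hc : |t| ≤ δ₂
    · have ht2 : t ^ 2 ≤ ε / (8 * B) := by
        have h1 : |t| ≤ Real.sqrt (ε / (8 * B)) := hc.trans (min_le_right _ _)
        calc t ^ 2 = |t| ^ 2 := (sq_abs t).symm
        _ ≤ Real.sqrt (ε / (8 * B)) ^ 2 := by
            exact pow_le_pow_left₀ (abs_nonneg t) h1 2
        _ = ε / (8 * B) := Real.sq_sqrt (by positivity)
      have h2 : B * |t - f t * deriv f t| ≤ ε/2 * |t| := by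
        calc B * |t - f t * deriv f t| ≤ B * (4 * t ^ 2 * |t|) :=
            mul_le_mul_of_nonneg_left hvt' hB0.le
        _ ≤ B * (4 * (ε / (8 * B)) * |t|) := by
            apply mul_le_mul_of_nonneg_left _ hB0.le
            apply mul_le_mul_of_nonneg_right _ (abs_nonneg t)
            linarith
        _ = ε/2 * |t| := by field_simp; ring
      linarith
    · push_neg at hc
      have ht0 : |t| ≠ 0 := ne_of_gt (lt_trans hδ₂pos hc)
      have h1 : |t - f t * deriv f t| ≤ 2 * |t| := by
        have ha : |f t * deriv f t| ≤ |t| := by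
          rw [abs_mul, abs_of_pos hDpos']
          calc |f t| * deriv f t ≤ |t| * 1 :=
            mul_le_mul (hfa t) hD1' hDpos'.le (abs_nonneg t)
          _ = |t| := mul_one _
        calc |t - f t * deriv f t| ≤ |t| + |f t * deriv f t| := by
              rw [sub_eq_add_neg]
              exact (abs_add_le _ _).trans (by rw [abs_neg])
        _ ≤ 2 * |t| := by linarith
      have hδ₂q : δ₂ ^ (q - 2) ≤ |t| ^ (q - 2) :=
        Real.rpow_le_rpow hδ₂pos.le hc.le (by linarith)
      have hsp : |t| ^ (q - 1) = |t| ^ (q - 2) * |t| := by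
        rw [show q - 1 = (q - 2) + 1 by ring, Real.rpow_add_one ht0]
      have h2 : B * |t - f t * deriv f t| ≤ C₃ * |t| ^ (q - 1) := by
        calc B * |t - f t * deriv f t| ≤ B * (2 * |t|) :=
            mul_le_mul_of_nonneg_left h1 hB0.le
        _ = C₃ * δ₂ ^ (q - 2) * |t| := by rw [hC₃]; field_simp
        _ ≤ C₃ * |t| ^ (q - 2) * |t| := by
            apply mul_le_mul_of_nonneg_right _ (abs_nonneg t)
            exact mul_le_mul_of_nonneg_left hδ₂q hC₃pos.le
        _ = C₃ * |t| ^ (q - 1) := by rw [hsp]; ring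
      have := mul_nonneg (le_of_lt (by positivity : (0:ℝ) < ε/2)) (abs_nonneg t)
      linarith
  have hfin : (C₁ + C₂) * |t| ^ (q - 1) + C₃ * |t| ^ (q - 1)
      = (C₁ + C₂ + C₃) * |t| ^ (q - 1) := by ring
  linarith
end

section
/- Let g : ℝ → ℝ be continuous, let G(t) = ∫₀ᵗ g(s) ds, and suppose G(t) > 0 for all t ≠ 0 and g(t)·t ≥ 4·G(t) for all t ∈ ℝ. Then the function t ↦ G(t)/t² is nondecreasing on (0, +∞) and nonincreasing on (−∞, 0); in particular, for t, s ≠ 0 with |t| ≤ |s| and t·s > 0, one has G(t)/t² ≤ G(s)/s². -/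
/-- If `G(t) = ∫₀ᵗ g > 0` for `t ≠ 0` and `g(t) t ≥ 4 G(t)` for all `t`, then
`t ↦ G(t)/t²` is nondecreasing on `(0,∞)` and nonincreasing on `(−∞,0)`; in particular,
for `t, s ≠ 0` with `|t| ≤ |s|` and `t·s > 0`, `G(t)/t² ≤ G(s)/s²`. -/
theorem stmt_18 (g : ℝ → ℝ) (hg : Continuous g)
    (hGpos : ∀ t : ℝ, t ≠ 0 → 0 < ∫ s in (0 : ℝ)..t, g s)
    (hAR : ∀ t : ℝ, 4 * ∫ s in (0 : ℝ)..t, g s ≤ g t * t) :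
    MonotoneOn (fun t => (∫ s in (0 : ℝ)..t, g s) / t ^ 2) (Set.Ioi (0 : ℝ)) ∧
    AntitoneOn (fun t => (∫ s in (0 : ℝ)..t, g s) / t ^ 2) (Set.Iio (0 : ℝ)) ∧
    (∀ t s : ℝ, t ≠ 0 → s ≠ 0 → |t| ≤ |s| → 0 < t * s →
      (∫ u in (0 : ℝ)..t, g u) / t ^ 2 ≤ (∫ u in (0 : ℝ)..s, g u) / s ^ 2) := by
  set G : ℝ → ℝ := fun t => ∫ s in (0 : ℝ)..t, g s with hGdef
  have hGderiv : ∀ t : ℝ, HasDerivAt G (g t) t := fun t =>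
    intervalIntegral.integral_hasDerivAt_right (hg.intervalIntegrable _ _)
      (hg.stronglyMeasurableAtFilter _ _) hg.continuousAt
  have hF : ∀ t : ℝ, t ≠ 0 → HasDerivAt (fun u => G u / u ^ 2)
      ((g t * t ^ 2 - G t * (2 * t)) / (t ^ 2) ^ 2) t := by
    intro t ht
    have h2 : HasDerivAt (fun u : ℝ => u ^ 2) ((2 : ℕ) * t ^ 1) t := hasDerivAt_pow 2 t
    have := (hGderiv t).div h2 (pow_ne_zero 2 ht)
    exact this.congr_deriv (by push_cast; ring)
  have hnum : ∀ t : ℝ, t ≠ 0 → 0 < g t * t - 2 * G t := by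
    intro t ht
    have h1 := hAR t
    have h2 := hGpos t ht
    simp only [hGdef] at *
    linarith
  have hderivval : ∀ t : ℝ, t ≠ 0 →
      deriv (fun u => G u / u ^ 2) t = (g t * t - 2 * G t) * t / (t ^ 2) ^ 2 := by
    intro t ht
    rw [(hF t ht).deriv]
    ring_nf
  have hdiff : ∀ t : ℝ, t ≠ 0 → DifferentiableAt ℝ (fun u => G u / u ^ 2) t :=
    fun t ht => (hF t ht).differentiableAt
  have hmono : MonotoneOn (fun t => G t / t ^ 2) (Set.Ioi (0 : ℝ)) := by
    apply monotoneOn_of_deriv_nonneg (convex_Ioi 0)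
    · exact fun t ht => ((hdiff t (ne_of_gt ht)).continuousAt).continuousWithinAt
    · rw [interior_Ioi]
      exact fun t ht => (hdiff t (ne_of_gt ht)).differentiableWithinAt
    · rw [interior_Ioi]
      intro t ht
      rw [hderivval t (ne_of_gt ht)]
      have h1 := hnum t (ne_of_gt ht)
      have ht2 : (0:ℝ) < t ^ 2 := pow_two_pos_of_ne_zero (ne_of_gt ht)
      have h3 : (0:ℝ) < (t ^ 2) ^ 2 := pow_pos ht2 2
      exact div_nonneg (mul_nonneg h1.le ht.le) h3.le
  have hanti : AntitoneOn (fun t => G t / t ^ 2) (Set.Iio (0 : ℝ)) := by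
    apply antitoneOn_of_deriv_nonpos (convex_Iio 0)
    · exact fun t ht => ((hdiff t (ne_of_lt ht)).continuousAt).continuousWithinAt
    · rw [interior_Iio]
      exact fun t ht => (hdiff t (ne_of_lt ht)).differentiableWithinAt
    · rw [interior_Iio]
      intro t ht
      rw [hderivval t (ne_of_lt ht)]
      have h1 := hnum t (ne_of_lt ht)
      have h2 : (g t * t - 2 * G t) * t ≤ 0 :=
        mul_nonpos_of_nonneg_of_nonpos h1.le ht.le
      have ht2 : (0:ℝ) < t ^ 2 := pow_two_pos_of_ne_zero (ne_of_lt ht)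
      have h3 : (0:ℝ) < (t ^ 2) ^ 2 := pow_pos ht2 2
      exact div_nonpos_of_nonpos_of_nonneg h2 h3.le
  refine ⟨hmono, hanti, ?_⟩
  intro t s ht hs hts hprod
  rcases lt_or_gt_of_ne ht with htneg | htpos
  · have hsneg : s < 0 := by
      by_contra h
      push_neg at h
      have : s ≠ 0 := hs
      nlinarith
    have : s ≤ t := by
      rw [abs_of_neg htneg, abs_of_neg hsneg] at hts
      linarith
    exact hanti hsneg htneg this
  · have hspos : 0 < s := by
      by_contra h
      push_neg at h
      nlinarith
    have : t ≤ s := by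
      rwa [abs_of_pos htpos, abs_of_pos hspos] at hts
    exact hmono htpos hspos this
end
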